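/- arXiv:1606.03926 — 2 statements merged into one kernel-verified Lean document; each statement's English description precedes it below -/
import Mathlib

section
/- Let X be a Banach space with a normalized unconditional Schauder basis E = {e_i}_{i∈ℕ} and let M = M(E) be the integer grid associated to E. Then there exists a sequence of retractions φ_n : M → M and a sequence of distinct points μ_n ∈ M, n ∈ ℕ, satisfying: (i) φ_n(M) = {μ_1,…,μ_n} for every n; (ii) {μ_j : j ∈ ℕ} is dense in M (indeed its closure in X is M); (iii) each φ_n is K-Lipschitz with K = uc(E) + 2·bc(E); (iv) φ_m ∘ φ_n = φ_n ∘ φ_m = φ_n for all n ≤ m. -/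
open scoped NNReal ENNReal

/-- `F` together with the Dirac map `δ : M → F` is (a realization of) the Lipschitz-free
space `𝓕(M)` of the pointed metric space `(M, base)`, characterized by its universal
property. -/
structure IsLipFreeSpace (M : Type*) [MetricSpace M] (base : M)
    (F : Type*) [NormedAddCommGroup F] [NormedSpace ℝ F] [CompleteSpace F]
    (δ : M → F) : Prop where
  isometry : Isometry δ
  map_base : δ base = 0
  dense_span : (Submodule.span ℝ (Set.range δ)).topologicalClosure = ⊤
  extend : ∀ (Z : Type) [NormedAddCommGroup Z] [NormedSpace ℝ Z] [CompleteSpace Z]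
    (L : ℝ≥0) (f : M → Z), LipschitzWith L f → f base = 0 →
    ∃ T : F →L[ℝ] Z, ‖T‖ ≤ (L : ℝ) ∧ ∀ x : M, T (δ x) = f x

/-- `F` together with `δ : M → F` is (a realization of) the relative Lipschitz-free space
`𝓕_N(M) ≅ 𝓕(M)/𝓕(N)`, again characterized by the universal property (with respect to
Lipschitz functions vanishing on `N`). -/
structure IsRelLipFreeSpace (M : Type*) [MetricSpace M] (N : Set M)
    (F : Type*) [NormedAddCommGroup F] [NormedSpace ℝ F] [CompleteSpace F]
    (δ : M → F) : Prop where
  lipschitz : LipschitzWith 1 δ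
  vanish : ∀ x ∈ N, δ x = 0
  dense_span : (Submodule.span ℝ (Set.range δ)).topologicalClosure = ⊤
  extend : ∀ (Z : Type) [NormedAddCommGroup Z] [NormedSpace ℝ Z] [CompleteSpace Z]
    (L : ℝ≥0) (f : M → Z), LipschitzWith L f → (∀ x ∈ N, f x = 0) →
    ∃ T : F →L[ℝ] Z, ‖T‖ ≤ (L : ℝ) ∧ ∀ x : M, T (δ x) = f x

/-- `N` is an `(a,b)`-net for some `a, b > 0`. -/
def IsNet {X : Type*} [MetricSpace X] (N : Set X) : Prop :=
  ∃ a b : ℝ, 0 < a ∧ 0 < b ∧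
    (∀ x ∈ N, ∀ y ∈ N, x ≠ y → a ≤ dist x y) ∧
    (∀ x : X, EMetric.infEdist x N < ENNReal.ofReal b)

/-- A sequence `e` is a Schauder basis of `Y`: every vector has a unique expansion. -/
def IsSchauderBasis {Y : Type*} [NormedAddCommGroup Y] [NormedSpace ℝ Y] (e : ℕ → Y) : Prop :=
  ∀ y : Y, ∃! a : ℕ → ℝ,
    Filter.Tendsto (fun n => ∑ i ∈ Finset.range n, a i • e i) Filter.atTop (nhds y)

/-- Density character of a topological space. -/
noncomputable def densityCharacter (M : Type u) [TopologicalSpace M] : Cardinal.{u} :=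
  ⨅ s : {s : Set M // Dense s}, Cardinal.mk s

/-- `e` is an unconditional Schauder basis: it is a Schauder basis and every basis
expansion converges unconditionally (i.e. is summable). -/
def IsUnconditionalSchauderBasis {Y : Type*} [NormedAddCommGroup Y] [NormedSpace ℝ Y]
    (e : ℕ → Y) : Prop :=
  IsSchauderBasis e ∧ ∀ (a : ℕ → ℝ) (y : Y),
    Filter.Tendsto (fun n => ∑ i ∈ Finset.range n, a i • e i) Filter.atTop (nhds y) →
    Summable fun i => a i • e i

/-- The basis constant `bc(E)` of a Schauder basis, expressed via finite combinations. -/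
noncomputable def basisConstant {Y : Type*} [NormedAddCommGroup Y] [NormedSpace ℝ Y]
    (e : ℕ → Y) : ℝ :=
  sInf {C : ℝ | 0 ≤ C ∧ ∀ (a : ℕ → ℝ) (m n : ℕ), m ≤ n →
    ‖∑ i ∈ Finset.range m, a i • e i‖ ≤ C * ‖∑ i ∈ Finset.range n, a i • e i‖}

/-- The unconditional constant `uc(E)` of a basis, expressed via finite combinations
and sign changes. -/
noncomputable def unconditionalConstant {Y : Type*} [NormedAddCommGroup Y]
    [NormedSpace ℝ Y] (e : ℕ → Y) : ℝ :=
  sInf {C : ℝ | 0 ≤ C ∧ ∀ (a ε : ℕ → ℝ) (s : Finset ℕ), (∀ i, ε i = 1 ∨ ε i = -1) →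
    ‖∑ i ∈ s, (ε i * a i) • e i‖ ≤ C * ‖∑ i ∈ s, a i • e i‖}

/-- The integer grid `M(E)` associated to a basis `e`: all vectors whose basis expansion
has integer coefficients. -/
def integerGrid {Y : Type*} [NormedAddCommGroup Y] [NormedSpace ℝ Y] (e : ℕ → Y) :
    Set Y :=
  {x | ∃ a : ℕ → ℤ,
    Filter.Tendsto (fun n => ∑ i ∈ Finset.range n, (a i : ℝ) • e i) Filter.atTop (nhds x)}


open Filter Finset

section Work
variable {Y : Type*} [NormedAddCommGroup Y] [NormedSpace ℝ Y]

/-- Integer-coefficient finite combination. -/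
noncomputable def Phi (e : ℕ → Y) (c : ℕ →₀ ℤ) : Y := c.sum fun i z => (z : ℝ) • e i

lemma Phi_sub (e : ℕ → Y) (c d : ℕ →₀ ℤ) : Phi e (c - d) = Phi e c - Phi e d := by
  apply Finsupp.sum_sub_index
  intro a b₁ b₂
  push_cast
  rw [sub_smul]

lemma Phi_single (e : ℕ → Y) (i : ℕ) (z : ℤ) : Phi e (Finsupp.single i z) = (z : ℝ) • e i := by
  simp [Phi, Finsupp.sum_single_index]

lemma sum_range_eq_Phi (e : ℕ → Y) (c : ℕ →₀ ℤ) {n : ℕ} (h : ∀ i, c i ≠ 0 → i < n) :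
    ∑ i ∈ Finset.range n, (c i : ℝ) • e i = Phi e c := by
  rw [Phi, Finsupp.sum]
  refine (Finset.sum_subset ?_ ?_).symm
  · intro i hi
    exact Finset.mem_range.2 (h i (Finsupp.mem_support_iff.1 hi))
  · intro i _ hi
    simp [Finsupp.notMem_support_iff.1 hi]

lemma tendsto_Phi (e : ℕ → Y) (c : ℕ →₀ ℤ) :
    Tendsto (fun n => ∑ i ∈ Finset.range n, ((c i : ℝ)) • e i) atTop (nhds (Phi e c)) := by
  have : (fun n => ∑ i ∈ Finset.range n, ((c i : ℝ)) • e i) =ᶠ[atTop] (fun _ => Phi e c) := by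
    filter_upwards [eventually_ge_atTop (c.support.sup id + 1)] with n hn
    apply sum_range_eq_Phi
    intro i hi
    have : i ≤ c.support.sup id := Finset.le_sup (f := id) (Finsupp.mem_support_iff.2 hi)
    omega
  exact Tendsto.congr' this.symm tendsto_const_nhds

lemma Phi_mem (e : ℕ → Y) (c : ℕ →₀ ℤ) : Phi e c ∈ integerGrid e :=
  ⟨fun i => c i, tendsto_Phi e c⟩

lemma coeff_unique {e : ℕ → Y} (hb : IsSchauderBasis e) {a b : ℕ → ℝ} {y : Y}
    (ha : Tendsto (fun n => ∑ i ∈ Finset.range n, a i • e i) atTop (nhds y))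
    (hbt : Tendsto (fun n => ∑ i ∈ Finset.range n, b i • e i) atTop (nhds y)) : a = b := by
  obtain ⟨u, _, hu⟩ := hb y
  rw [hu a ha, hu b hbt]

lemma Phi_inj {e : ℕ → Y} (hb : IsSchauderBasis e) : Function.Injective (Phi e) := by
  intro c d h
  have := coeff_unique hb (tendsto_Phi e c) (h ▸ tendsto_Phi e d)
  ext i
  exact_mod_cast congrFun this i

lemma grid_surj {e : ℕ → Y} (hnorm : ∀ i, ‖e i‖ = 1) (x : Y) (hx : x ∈ integerGrid e) :
    ∃ c : ℕ →₀ ℤ, Phi e c = x := by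
  obtain ⟨a, ha⟩ := hx
  -- the terms tend to zero
  have hterm : Tendsto (fun i => ((a i : ℝ)) • e i) atTop (nhds 0) := by
    have := (ha.comp (tendsto_add_atTop_nat 1)).sub ha
    simp only [Function.comp] at this
    rw [sub_self] at this
    refine this.congr ?_
    intro n
    rw [Finset.sum_range_succ]
    abel
  have hsmall : ∀ᶠ i in atTop, a i = 0 := by
    have := hterm.norm
    rw [norm_zero] at this
    have h2 := this.eventually_lt_const (by norm_num : (0:ℝ) < 1/2)
    filter_upwards [h2] with i hi
    rw [norm_smul, hnorm i, mul_one, Real.norm_eq_abs] at hi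
    have h3 : |(a i : ℝ)| < 1 := by linarith
    rw [← Int.cast_abs] at h3
    have h4 : |a i| < 1 := by exact_mod_cast h3
    rcases abs_lt.mp h4 with ⟨h5, h6⟩
    omega
  obtain ⟨N, hN⟩ := eventually_atTop.1 hsmall
  have hfin : (Function.support a).Finite := by
    apply Set.Finite.subset (Set.finite_Iio N)
    intro i hi
    simp only [Set.mem_Iio]
    by_contra h
    exact hi (hN i (by omega))
  refine ⟨Finsupp.ofSupportFinite a hfin, ?_⟩
  have h1 := tendsto_Phi e (Finsupp.ofSupportFinite a hfin)
  have h2 : (fun n => ∑ i ∈ Finset.range n, ((Finsupp.ofSupportFinite a hfin) i : ℝ) • e i)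
      = fun n => ∑ i ∈ Finset.range n, ((a i : ℝ)) • e i := rfl
  rw [h2] at h1
  exact tendsto_nhds_unique h1 ha

end Work


/-! ### Clamping and boxes on integer finsupps -/

def mid (z : ℤ) (N : ℕ) : ℤ := max (-(N:ℤ)) (min z N)

noncomputable def clampF (b : ℕ →₀ ℕ) (c : ℕ →₀ ℤ) : ℕ →₀ ℤ :=
  Finsupp.onFinset c.support (fun i => mid (c i) (b i))
    (fun i h => by
      rw [Finsupp.mem_support_iff]
      intro hc
      apply h
      simp [mid, hc])

@[simp] lemma clampF_apply (b : ℕ →₀ ℕ) (c : ℕ →₀ ℤ) (i : ℕ) :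
    clampF b c i = mid (c i) (b i) := rfl

def BoxS (b : ℕ →₀ ℕ) : Set (ℕ →₀ ℤ) := {c | ∀ i, (c i).natAbs ≤ b i}

lemma clampF_mem (b : ℕ →₀ ℕ) (c : ℕ →₀ ℤ) : clampF b c ∈ BoxS b := by
  intro i; simp [mid]; omega

lemma clampF_eq_self {b : ℕ →₀ ℕ} {c : ℕ →₀ ℤ} (h : c ∈ BoxS b) : clampF b c = c := by
  ext i; have := h i; simp [mid] at *; omega

lemma clampF_clampF {b b' : ℕ →₀ ℕ} (h : ∀ i, b i ≤ b' i) (c : ℕ →₀ ℤ) :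
    clampF b (clampF b' c) = clampF b c := by
  ext i; have := h i; simp [mid]; omega

lemma clampF_eq_of_mem {b b' : ℕ →₀ ℕ} (h : ∀ i, b i ≤ b' i) {c : ℕ →₀ ℤ}
    (hm : clampF b' c ∈ BoxS b) : clampF b c = clampF b' c := by
  ext i; have := h i; have := hm i; simp [mid] at *; omega

lemma clampF_diff_le (b : ℕ →₀ ℕ) (c d : ℕ →₀ ℤ) (i : ℕ) :
    (clampF b c i - clampF b d i).natAbs ≤ (c i - d i).natAbs := by
  simp [mid]; omega

lemma BoxS_mono {b b' : ℕ →₀ ℕ} (h : ∀ i, b i ≤ b' i) : BoxS b ⊆ BoxS b' :=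
  fun c hc i => le_trans (hc i) (h i)

lemma BoxS_finite (b : ℕ →₀ ℕ) : (BoxS b).Finite := by
  rw [← Set.finite_coe_iff]
  have : ∀ (c : BoxS b) (i : b.support), (c.1 i.1) ∈ Finset.Icc (-(b i.1 : ℤ)) (b i.1) := by
    intro c i
    have := c.2 i.1
    rw [Finset.mem_Icc]
    omega
  apply Finite.of_injective (fun c : BoxS b => fun i : b.support =>
    (⟨c.1 i.1, this c i⟩ : (Finset.Icc (-(b i.1 : ℤ)) (b i.1) : Finset ℤ)))
  intro c d h
  apply Subtype.ext
  ext i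
  by_cases hi : i ∈ b.support
  · exact Subtype.ext_iff.1 (congrFun h ⟨i, hi⟩)
  · have hb : b i = 0 := Finsupp.notMem_support_iff.1 hi
    have h1 := c.2 i; have h2 := d.2 i
    rw [hb] at h1 h2
    omega

/-! ### The box schedule -/

noncomputable def BB (t : ℕ) : ℕ →₀ ℕ :=
  ∑ s ∈ Finset.range t, Finsupp.single (Nat.unpair s).1 1

lemma BB_apply (t i : ℕ) :
    BB t i = ((Finset.range t).filter (fun s => (Nat.unpair s).1 = i)).card := by
  rw [BB, Finsupp.finset_sum_apply, Finset.card_filter]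
  apply Finset.sum_congr rfl
  intro s _
  simp [Finsupp.single_apply]

lemma BB_mono {s t : ℕ} (h : s ≤ t) (i : ℕ) : BB s i ≤ BB t i := by
  rw [BB_apply, BB_apply]
  exact Finset.card_le_card (Finset.filter_subset_filter _
    (Finset.range_subset_range.2 h))

lemma BB_succ (t : ℕ) : BB (t+1) = BB t + Finsupp.single (Nat.unpair t).1 1 :=
  Finset.sum_range_succ _ t

lemma BB_succ_apply_ne (t i : ℕ) (h : i ≠ (Nat.unpair t).1) : BB (t+1) i = BB t i := by
  rw [BB_succ]
  simp [Finsupp.single_apply, Ne.symm h]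

lemma BB_succ_apply_eq (t : ℕ) : BB (t+1) (Nat.unpair t).1 = BB t (Nat.unpair t).1 + 1 := by
  rw [BB_succ]; simp

lemma BB_le_succ (t : ℕ) (i : ℕ) : BB t i ≤ BB (t+1) i := BB_mono (Nat.le_succ t) i

lemma BB_unbounded (i m : ℕ) : ∃ t, m ≤ BB t i := by
  refine ⟨Nat.pair i m + 1, ?_⟩
  rw [BB_apply]
  have hsub : (Finset.range m).image (Nat.pair i) ⊆
      (Finset.range (Nat.pair i m + 1)).filter (fun s => (Nat.unpair s).1 = i) := by
    intro s hs
    obtain ⟨k, hk, rfl⟩ := Finset.mem_image.1 hs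
    rw [Finset.mem_filter, Finset.mem_range]
    constructor
    · have := Nat.pair_lt_pair_right i (Finset.mem_range.1 hk)
      omega
    · rw [Nat.unpair_pair]
  have hinj : Function.Injective (Nat.pair i) := by
    intro a b h
    have := congrArg (fun x => (Nat.unpair x).2) h
    simpa [Nat.unpair_pair] using this
  calc m = ((Finset.range m).image (Nat.pair i)).card := by
            rw [Finset.card_image_of_injective _ hinj, Finset.card_range]
    _ ≤ _ := Finset.card_le_card hsub

lemma BB_cover (c : ℕ →₀ ℤ) : ∃ t, c ∈ BoxS (BB t) := by
  classical
  choose f hf using fun i => BB_unbounded i (c i).natAbs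
  refine ⟨c.support.sup f, fun i => ?_⟩
  by_cases hi : i ∈ c.support
  · exact le_trans (hf i) (BB_mono (Finset.le_sup hi) i)
  · rw [Finsupp.notMem_support_iff.1 hi]
    simp

/-! ### Layers, lists and counting -/

def layerS (t : ℕ) : Set (ℕ →₀ ℤ) := BoxS (BB (t+1)) \ BoxS (BB t)

lemma layerS_finite (t : ℕ) : (layerS t).Finite :=
  (BoxS_finite (BB (t+1))).subset Set.diff_subset

noncomputable def LL (t : ℕ) : List (ℕ →₀ ℤ) := (layerS_finite t).toFinset.toList

lemma LL_nodup (t : ℕ) : (LL t).Nodup := Finset.nodup_toList _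

lemma LL_mem {t : ℕ} {x : ℕ →₀ ℤ} : x ∈ LL t ↔ x ∈ layerS t := by
  rw [LL, Finset.mem_toList, Set.Finite.mem_toFinset]

lemma LL_length_pos (t : ℕ) : 0 < (LL t).length := by
  rw [List.length_pos_iff]
  intro h
  set i := (Nat.unpair t).1 with hi
  have : Finsupp.single i ((BB t i : ℤ) + 1) ∈ LL t := by
    rw [LL_mem]
    constructor
    · intro j
      by_cases hj : j = i
      · subst hj
        rw [Finsupp.single_eq_same]
        have := BB_succ_apply_eq t
        rw [← hi] at this
        omega
      · rw [Finsupp.single_eq_of_ne' (Ne.symm hj)]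
        simp
    · intro hmem
      have := hmem i
      rw [Finsupp.single_eq_same] at this
      omega
  rw [h] at this
  exact absurd this List.not_mem_nil

noncomputable def CC (t : ℕ) : ℕ := ∑ s ∈ Finset.range t, (LL s).length

lemma CC_succ (t : ℕ) : CC (t+1) = CC t + (LL t).length := Finset.sum_range_succ _ t

lemma CC_mono {s t : ℕ} (h : s ≤ t) : CC s ≤ CC t :=
  Finset.sum_le_sum_of_subset (Finset.range_subset_range.2 h)

lemma le_CC (t : ℕ) : t ≤ CC t := by
  induction t with
  | zero => simp [CC]
  | succ t ih =>
    rw [CC_succ]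
    have := LL_length_pos t
    omega

/-! ### The enumeration -/

lemma exists_tn (n : ℕ) : ∃ t, n ≤ CC (t+1) := ⟨n, by have := le_CC (n+1); omega⟩

noncomputable def tn (n : ℕ) : ℕ := Nat.find (exists_tn n)

lemma tn_spec (n : ℕ) : n ≤ CC (tn n + 1) := Nat.find_spec (exists_tn n)

lemma CC_tn_le (n : ℕ) : CC (tn n) ≤ n := by
  rcases Nat.eq_zero_or_pos (tn n) with h | h
  · rw [h]; simp [CC]
  · obtain ⟨t, ht⟩ := Nat.exists_eq_add_of_le h
    have ht' : tn n = t + 1 := by omega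
    have := Nat.find_min (exists_tn n) (m := t) (by simp only [tn] at ht' ⊢; omega)
    rw [ht']
    omega

lemma CC_tn_lt {n : ℕ} (hn : 0 < n) : CC (tn n) < n := by
  rcases Nat.eq_zero_or_pos (tn n) with h | h
  · rw [h]; simpa [CC]
  · obtain ⟨t, ht⟩ := Nat.exists_eq_add_of_le h
    have ht' : tn n = t + 1 := by omega
    have := Nat.find_min (exists_tn n) (m := t) (by simp only [tn] at ht' ⊢; omega)
    rw [ht']
    omega

lemma tn_mono {n m : ℕ} (h : n ≤ m) : tn n ≤ tn m :=
  Nat.find_min' _ (le_trans h (tn_spec m))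

lemma tn_zero : tn 0 = 0 := by
  have := Nat.find_min' (exists_tn 0) (m := 0) (Nat.zero_le _)
  simp only [tn] at *
  omega

lemma tn_succ_cases (n : ℕ) : tn (n+1) = tn n ∨ (tn (n+1) = tn n + 1 ∧ n = CC (tn n + 1)) := by
  have h1 : tn n ≤ tn (n+1) := tn_mono (Nat.le_succ n)
  have h2 : tn (n+1) ≤ tn n + 1 := by
    apply Nat.find_min'
    have := tn_spec n
    have h3 := CC_succ (tn n + 1)
    have := LL_length_pos (tn n + 1)
    omega
  rcases Nat.lt_or_ge n (CC (tn n + 1)) with h | h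
  · left
    have : tn (n+1) ≤ tn n := Nat.find_min' _ h
    omega
  · right
    have h4 := tn_spec n
    have h5 : n = CC (tn n + 1) := le_antisymm h4 h
    constructor
    · -- tn (n+1) ≠ tn n since n+1 > CC (tn n + 1)
      rcases (Nat.lt_or_ge (tn (n+1)) (tn n + 1)) with h6 | h6
      · exfalso
        have h7 := tn_spec (n+1)
        have : CC (tn (n+1) + 1) ≤ CC (tn n + 1) := CC_mono (by omega)
        omega
      · omega
    · exact h5

/-- position of `n`-th point (for `n ≥ 1`) inside its layer list -/
lemma pos_lt (n : ℕ) : n - CC (tn (n+1-1)) = n - CC (tn n) := rfl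

lemma posn_lt {n : ℕ} (hn : 0 < n) : n - 1 - CC (tn n) < (LL (tn n)).length := by
  have h1 := CC_tn_lt hn
  have h2 := tn_spec n
  have h3 := CC_succ (tn n)
  omega

noncomputable def muF (n : ℕ) : ℕ →₀ ℤ :=
  if n = 0 then 0 else (LL (tn n)).getD (n - 1 - CC (tn n)) 0

lemma muF_zero : muF 0 = 0 := rfl

lemma muF_pos {n : ℕ} (hn : 0 < n) :
    muF n = (LL (tn n))[n - 1 - CC (tn n)]'(posn_lt hn) := by
  rw [muF, if_neg (by omega), List.getD_eq_getElem _ _ (posn_lt hn)]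

lemma muF_mem_layer {n : ℕ} (hn : 0 < n) : muF n ∈ layerS (tn n) := by
  rw [muF_pos hn, ← LL_mem]
  exact List.getElem_mem _

/-- the current partial layer -/
noncomputable def AnL (n : ℕ) : List (ℕ →₀ ℤ) := (LL (tn n)).take (n - CC (tn n))

lemma AnL_zero : AnL 0 = [] := by
  rw [AnL, tn_zero]
  simp [CC]

lemma AnL_subset_layer {n : ℕ} {x : ℕ →₀ ℤ} (h : x ∈ AnL n) : x ∈ layerS (tn n) :=
  LL_mem.1 (List.take_subset _ _ h)

/-- the retraction at stage `n` -/
noncomputable def phiF (n : ℕ) (c : ℕ →₀ ℤ) : ℕ →₀ ℤ :=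
  if clampF (BB (tn n + 1)) c ∈ AnL n then clampF (BB (tn n + 1)) c else clampF (BB (tn n)) c

/-- the target set at stage `n` -/
def SS (n : ℕ) : Set (ℕ →₀ ℤ) := BoxS (BB (tn n)) ∪ {x | x ∈ AnL n}

lemma phiF_mem_SS (n : ℕ) (c : ℕ →₀ ℤ) : phiF n c ∈ SS n := by
  rw [phiF]
  split
  · right; assumption
  · left; exact clampF_mem _ _

lemma phiF_fixes {n : ℕ} {x : ℕ →₀ ℤ} (h : x ∈ SS n) : phiF n x = x := by
  rcases h with h | h
  · have hx : x ∈ BoxS (BB (tn n + 1)) := BoxS_mono (BB_le_succ (tn n)) h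
    rw [phiF, clampF_eq_self hx]
    split
    · rfl
    · exact clampF_eq_self h
  · have hx : x ∈ BoxS (BB (tn n + 1)) := (AnL_subset_layer h).1
    rw [phiF, clampF_eq_self hx, if_pos (by exact h)]

lemma SS_range (n : ℕ) : Set.range (phiF n) = SS n := by
  apply Set.Subset.antisymm
  · rintro _ ⟨c, rfl⟩
    exact phiF_mem_SS n c
  · intro x hx
    exact ⟨x, phiF_fixes hx⟩

/-! ### Structure of the enumeration -/

lemma BB_zero : BB 0 = 0 := by simp [BB]

lemma BoxS_zero : BoxS (0 : ℕ →₀ ℕ) = {0} := by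
  ext c
  constructor
  · intro h
    have : ∀ i, c i = 0 := by intro i; have := h i; simp at this; omega
    exact Finsupp.ext this
  · rintro rfl
    intro i; simp

lemma BoxS_succ_union (t : ℕ) : BoxS (BB (t+1)) = BoxS (BB t) ∪ layerS t := by
  apply Set.Subset.antisymm
  · intro c hc
    by_cases h : c ∈ BoxS (BB t)
    · exact Or.inl h
    · exact Or.inr ⟨hc, h⟩
  · rintro c (hc | hc)
    · exact BoxS_mono (BB_le_succ t) hc
    · exact hc.1

lemma AnL_full {n : ℕ} (h : tn (n+1) = tn n + 1) (h2 : n = CC (tn n + 1)) :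
    AnL n = LL (tn n) := by
  rw [AnL]
  have h3 := CC_succ (tn n)
  have h4 : n - CC (tn n) = (LL (tn n)).length := by omega
  rw [h4, List.take_length]

lemma SS_succ (n : ℕ) : SS (n+1) = SS n ∪ {muF (n+1)} := by
  rcases tn_succ_cases n with h | ⟨h, h2⟩
  · -- same layer
    have hCC : CC (tn n) ≤ n := CC_tn_le n
    have hk : n - CC (tn n) < (LL (tn n)).length := by
      have := tn_spec (n+1); rw [h] at this
      have := CC_succ (tn n)
      omega
    have htake : AnL (n+1) = AnL n ++ [(LL (tn n))[n - CC (tn n)]'hk] := by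
      rw [AnL, AnL, h]
      have : n + 1 - CC (tn n) = (n - CC (tn n)) + 1 := by omega
      rw [this, List.take_succ, List.getElem?_eq_getElem hk]
      rfl
    have hmu : muF (n+1) = (LL (tn n))[n - CC (tn n)]'hk := by
      rw [muF_pos (by omega)]
      simp only [h, show n + 1 - 1 - CC (tn n) = n - CC (tn n) from by omega]
    rw [SS, SS, htake, hmu, h]
    ext x
    simp only [Set.mem_union, Set.mem_setOf_eq, List.mem_append, List.mem_singleton,
      Set.mem_singleton_iff]
    tauto
  · -- new layer
    have hfull : AnL n = LL (tn n) := AnL_full h h2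
    have hSn : SS n = BoxS (BB (tn n + 1)) := by
      rw [SS, hfull, BoxS_succ_union]
      ext x
      simp only [Set.mem_union, Set.mem_setOf_eq, LL_mem]
    have hk : 0 < (LL (tn n + 1)).length := LL_length_pos _
    have htake : AnL (n+1) = [(LL (tn n + 1))[0]'hk] := by
      rw [AnL, h]
      have : n + 1 - CC (tn n + 1) = 1 := by omega
      rw [this, List.take_succ, List.getElem?_eq_getElem hk]
      rfl
    have hmu : muF (n+1) = (LL (tn n + 1))[0]'hk := by
      rw [muF_pos (by omega)]
      simp only [h, show n + 1 - 1 - CC (tn n + 1) = 0 from by omega]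
    rw [SS, hSn, htake, hmu, h]
    ext x
    simp only [Set.mem_union, Set.mem_setOf_eq, List.mem_singleton, Set.mem_singleton_iff]
lemma SS_zero : SS 0 = {0} := by
  rw [SS, tn_zero, BB_zero, BoxS_zero, AnL_zero]
  simp

lemma muF_mem_SS (n : ℕ) : muF n ∈ SS n := by
  cases n with
  | zero => rw [muF_zero, SS_zero]; rfl
  | succ n => rw [SS_succ]; right; rfl

lemma SS_succ_mono (n : ℕ) : SS n ⊆ SS (n+1) := by
  rw [SS_succ]; exact Set.subset_union_left

lemma SS_mono {n m : ℕ} (h : n ≤ m) : SS n ⊆ SS m := by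
  induction m with
  | zero => rw [Nat.le_zero.1 h]
  | succ m ih =>
    rcases Nat.lt_or_ge n (m+1) with h2 | h2
    · exact le_trans (ih (by omega)) (SS_succ_mono m)
    · rw [le_antisymm h h2]

lemma SS_eq_image (n : ℕ) : SS n = muF '' Set.Iic n := by
  induction n with
  | zero =>
    rw [SS_zero]
    ext x
    simp only [Set.mem_singleton_iff, Set.mem_image, Set.mem_Iic, Nat.le_zero]
    constructor
    · rintro rfl; exact ⟨0, rfl, muF_zero⟩
    · rintro ⟨j, rfl, rfl⟩; exact muF_zero.symm
  | succ n ih =>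
    rw [SS_succ, ih]
    ext x
    simp only [Set.mem_union, Set.mem_image, Set.mem_Iic, Set.mem_singleton_iff]
    constructor
    · rintro (⟨j, hj, rfl⟩ | rfl)
      · exact ⟨j, by omega, rfl⟩
      · exact ⟨n+1, le_refl _, rfl⟩
    · rintro ⟨j, hj, rfl⟩
      rcases Nat.lt_or_ge j (n+1) with h2 | h2
      · exact Or.inl ⟨j, by omega, rfl⟩
      · right; rw [le_antisymm hj h2]

/-! ### Injectivity and surjectivity of the enumeration -/

lemma zero_mem_BoxS (b : ℕ →₀ ℕ) : 0 ∈ BoxS b := by intro i; simp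

lemma muF_injective : Function.Injective muF := by
  have key : ∀ m m', m < m' → muF m ≠ muF m' := by
    intro m m' hmm
    have hm' : 0 < m' := by omega
    have hlay' := muF_mem_layer hm'
    rcases Nat.eq_zero_or_pos m with rfl | hm
    · rw [muF_zero]
      intro h
      exact hlay'.2 (h ▸ zero_mem_BoxS _)
    · have hlay := muF_mem_layer hm
      have ht : tn m ≤ tn m' := tn_mono (by omega)
      rcases lt_or_eq_of_le ht with ht2 | ht2
      · intro h
        apply hlay'.2
        rw [← h]
        exact BoxS_mono (fun i => BB_mono ht2 i) hlay.1
      · intro h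
        rw [muF_pos hm, muF_pos hm'] at h
        have hCm := CC_tn_lt hm
        have hCm' := CC_tn_lt hm'
        simp only [ht2] at h hCm
        have := (LL_nodup (tn m')).getElem_inj_iff.mp h
        omega
  intro m m' h
  by_contra hne
  rcases Nat.lt_or_ge m m' with h2 | h2
  · exact key m m' h2 h
  · exact key m' m (by omega) h.symm

lemma muF_surjective : Function.Surjective muF := by
  classical
  intro c
  by_cases hc : c = 0
  · exact ⟨0, by rw [muF_zero, hc]⟩
  have hex := BB_cover c
  set T := Nat.find hex with hT
  have hspec : c ∈ BoxS (BB T) := Nat.find_spec hex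
  have hTpos : 0 < T := by
    rcases Nat.eq_zero_or_pos T with h | h
    · exfalso
      rw [h, BB_zero, BoxS_zero] at hspec
      exact hc hspec
    · exact h
  obtain ⟨T', hT'⟩ : ∃ T', T = T' + 1 := ⟨T - 1, by omega⟩
  rw [hT'] at hspec
  have hlay : c ∈ layerS T' := by
    refine ⟨hspec, fun h => ?_⟩
    have := Nat.find_min hex (m := T') (by rw [← hT]; omega)
    exact this h
  have hmemL : c ∈ LL T' := LL_mem.2 hlay
  set j := List.idxOf c (LL T') with hj
  have hjlt : j < (LL T').length := List.idxOf_lt_length_iff.2 hmemL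
  refine ⟨CC T' + j + 1, ?_⟩
  set n := CC T' + j + 1 with hn
  have htn : tn n = T' := by
    have h1 : tn n ≤ T' := Nat.find_min' _ (by rw [CC_succ]; omega)
    have h2 : T' ≤ tn n := by
      by_contra h3
      have h4 := tn_spec n
      have h5 : CC (tn n + 1) ≤ CC T' := CC_mono (by omega)
      omega
    omega
  rw [muF_pos (by omega)]
  simp only [htn, show n - 1 - CC T' = j from by omega]
  exact List.getElem_idxOf hjlt

/-! ### The semigroup property -/

lemma phiF_succ (n : ℕ) : phiF n ∘ phiF (n+1) = phiF n := by
  funext x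
  simp only [Function.comp_apply]
  rcases tn_succ_cases n with h | ⟨h, h2⟩
  · -- same layer
    set t := tn n
    set b := BB t
    set b' := BB (t+1)
    have hCC : CC t ≤ n := CC_tn_le n
    have hk : n - CC t < (LL t).length := by
      have := tn_spec (n+1); rw [h] at this
      have := CC_succ t
      omega
    set p := (LL t)[n - CC t]'hk with hp
    have htake : AnL (n+1) = AnL n ++ [p] := by
      rw [AnL, AnL, h]
      have : n + 1 - CC t = (n - CC t) + 1 := by omega
      rw [this, List.take_succ, List.getElem?_eq_getElem hk]
      rfl
    have hpnot : p ∉ AnL n := by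
      have hnd : (AnL (n+1)).Nodup := by
        rw [AnL, h]
        exact (List.take_sublist _ _).nodup (LL_nodup t)
      rw [htake] at hnd
      have := List.disjoint_of_nodup_append hnd
      intro hmem
      exact this hmem (List.mem_singleton_self p)
    have hplay : p ∈ layerS t := by
      rw [← LL_mem]
      exact List.getElem_mem _
    set c' := clampF b' x with hc'
    have hphi1 : phiF (n+1) x = if c' ∈ AnL n ++ [p] then c' else clampF b x := by
      rw [phiF, h, htake]
    have hphin : phiF n x = if c' ∈ AnL n then c' else clampF b x := rfl
    rw [hphi1, hphin]
    by_cases h1 : c' ∈ AnL n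
    · rw [if_pos (by rw [List.mem_append]; left; exact h1), if_pos h1]
      exact phiF_fixes (Or.inr h1)
    · rw [if_neg h1]
      by_cases h2 : c' = p
      · rw [if_pos (by rw [List.mem_append, h2]; right; exact List.mem_singleton_self p)]
        have hcp : clampF b' c' = c' := clampF_eq_self (h2 ▸ hplay.1)
        have : phiF n c' = clampF b c' := by
          rw [phiF]
          change (if clampF b' c' ∈ AnL n then clampF b' c' else clampF b c') = _
          rw [hcp, if_neg (h2 ▸ hpnot)]
        rw [this, hc', clampF_clampF (fun i => BB_le_succ t i)]
      · rw [if_neg (by rw [List.mem_append, List.mem_singleton]; tauto)]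
        exact phiF_fixes (Or.inl (clampF_mem _ _))
  · -- new layer
    have hfull : AnL n = LL (tn n) := AnL_full h h2
    have hphin : ∀ z, phiF n z = clampF (BB (tn n + 1)) z := by
      intro z
      rw [phiF, hfull]
      by_cases hz : clampF (BB (tn n + 1)) z ∈ LL (tn n)
      · rw [if_pos hz]
      · rw [if_neg hz]
        refine clampF_eq_of_mem (fun i => BB_le_succ (tn n) i) ?_
        have hmem := clampF_mem (BB (tn n + 1)) z
        by_contra hnot
        exact hz (LL_mem.2 ⟨hmem, hnot⟩)
    rw [hphin, hphin, phiF, h]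
    by_cases h3 : clampF (BB (tn n + 1 + 1)) x ∈ AnL (n+1)
    · rw [if_pos h3]
      have : clampF (BB (tn n + 1 + 1)) x ∈ BoxS (BB (tn n + 1 + 1)) := clampF_mem _ _
      rw [← clampF_clampF (fun i => BB_le_succ (tn n + 1) i) x]
    · rw [if_neg h3]
      exact clampF_eq_self (clampF_mem _ _)

lemma phiF_comp_ge {n m : ℕ} (h : n ≤ m) : phiF m ∘ phiF n = phiF n := by
  funext x
  simp only [Function.comp_apply]
  exact phiF_fixes (SS_mono h (phiF_mem_SS n x))

lemma phiF_comp_le {n m : ℕ} (h : n ≤ m) : phiF n ∘ phiF m = phiF n := by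
  induction m with
  | zero =>
    rw [Nat.le_zero.1 h]
    exact phiF_comp_ge (le_refl 0)
  | succ m ih =>
    rcases Nat.lt_or_ge n (m+1) with h2 | h2
    · have : phiF n ∘ phiF m = phiF n := ih (by omega)
      calc phiF n ∘ phiF (m+1) = (phiF n ∘ phiF m) ∘ phiF (m+1) := by rw [this]
        _ = phiF n ∘ (phiF m ∘ phiF (m+1)) := by rw [Function.comp_assoc]
        _ = phiF n ∘ phiF m := by rw [phiF_succ]
        _ = phiF n := this
    · rw [le_antisymm h h2]
      exact phiF_comp_ge (le_refl _)

section Estimates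
variable {Y : Type*} [NormedAddCommGroup Y] [NormedSpace ℝ Y]

def ucSet (e : ℕ → Y) : Set ℝ :=
  {C : ℝ | 0 ≤ C ∧ ∀ (a ε : ℕ → ℝ) (s : Finset ℕ), (∀ i, ε i = 1 ∨ ε i = -1) →
    ‖∑ i ∈ s, (ε i * a i) • e i‖ ≤ C * ‖∑ i ∈ s, a i • e i‖}

def bcSet (e : ℕ → Y) : Set ℝ :=
  {C : ℝ | 0 ≤ C ∧ ∀ (a : ℕ → ℝ) (m n : ℕ), m ≤ n →
    ‖∑ i ∈ Finset.range m, a i • e i‖ ≤ C * ‖∑ i ∈ Finset.range n, a i • e i‖}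

lemma unconditionalConstant_eq (e : ℕ → Y) : unconditionalConstant e = sInf (ucSet e) := rfl
lemma basisConstant_eq (e : ℕ → Y) : basisConstant e = sInf (bcSet e) := rfl

lemma sign_lemma (e : ℕ → Y) (a : ℕ → ℝ) (s : Finset ℕ) :
    ∀ (θ : ℕ → ℝ), (∀ i ∈ s, |θ i| ≤ 1) → ∀ w : Y,
    ∃ ε : ℕ → ℝ, (∀ i, ε i = 1 ∨ ε i = -1) ∧
      ‖w + ∑ i ∈ s, (θ i * a i) • e i‖ ≤ ‖w + ∑ i ∈ s, (ε i * a i) • e i‖ := by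
  induction s using Finset.induction_on with
  | empty =>
    intro θ _ w
    exact ⟨fun _ => 1, fun _ => Or.inl rfl, by simp⟩
  | @insert j s hj ih =>
    intro θ hθ w
    obtain ⟨ε₁, hε₁, hb₁⟩ := ih θ (fun i hi => hθ i (Finset.mem_insert_of_mem hi))
      (w + (θ j * a j) • e j)
    set u := w + ∑ i ∈ s, (ε₁ i * a i) • e i with hu
    set v := a j • e j with hv
    have ht : |θ j| ≤ 1 := hθ j (Finset.mem_insert_self j s)
    have hconv : ‖u + θ j • v‖ ≤ max ‖u + v‖ ‖u - v‖ := by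
      have hdecomp : u + θ j • v = ((1 + θ j)/2) • (u + v) + ((1 - θ j)/2) • (u - v) := by
        rw [smul_add, smul_sub]
        rw [abs_le] at ht
        module
      rw [hdecomp]
      calc ‖((1 + θ j)/2) • (u + v) + ((1 - θ j)/2) • (u - v)‖
          ≤ ‖((1 + θ j)/2) • (u + v)‖ + ‖((1 - θ j)/2) • (u - v)‖ := norm_add_le _ _
        _ = ((1 + θ j)/2) * ‖u + v‖ + ((1 - θ j)/2) * ‖u - v‖ := by
            rw [norm_smul, norm_smul, Real.norm_eq_abs, Real.norm_eq_abs,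
              abs_of_nonneg (by rw [abs_le] at ht; linarith),
              abs_of_nonneg (by rw [abs_le] at ht; linarith)]
        _ ≤ ((1 + θ j)/2) * max ‖u + v‖ ‖u - v‖ + ((1 - θ j)/2) * max ‖u + v‖ ‖u - v‖ := by
            rw [abs_le] at ht
            gcongr
            · linarith
            · exact le_max_left _ _
            · linarith
            · exact le_max_right _ _
        _ = max ‖u + v‖ ‖u - v‖ := by ring
    -- choose the sign achieving the max
    rcases le_total ‖u - v‖ ‖u + v‖ with hm | hm
    · refine ⟨fun i => if i = j then 1 else ε₁ i, fun i => by by_cases h : i = j <;> simp [h, hε₁ i], ?_⟩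
      rw [Finset.sum_insert hj, Finset.sum_insert hj]
      have hsum : ∑ i ∈ s, ((if i = j then (1:ℝ) else ε₁ i) * a i) • e i
          = ∑ i ∈ s, (ε₁ i * a i) • e i := by
        apply Finset.sum_congr rfl
        intro i hi
        rw [if_neg (by rintro rfl; exact hj hi)]
      beta_reduce
      rw [hsum, if_pos rfl]
      calc ‖w + ((θ j * a j) • e j + ∑ i ∈ s, (θ i * a i) • e i)‖
          = ‖(w + (θ j * a j) • e j) + ∑ i ∈ s, (θ i * a i) • e i‖ := by rw [add_assoc]
        _ ≤ ‖(w + (θ j * a j) • e j) + ∑ i ∈ s, (ε₁ i * a i) • e i‖ := hb₁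
        _ = ‖u + θ j • v‖ := by rw [hu, hv, smul_smul]; congr 1; abel
        _ ≤ max ‖u + v‖ ‖u - v‖ := hconv
        _ = ‖u + v‖ := max_eq_left hm
        _ = ‖w + ((1 * a j) • e j + ∑ i ∈ s, (ε₁ i * a i) • e i)‖ := by
            rw [hu, hv, one_mul]; congr 1; abel
    · refine ⟨fun i => if i = j then -1 else ε₁ i, fun i => by by_cases h : i = j <;> simp [h, hε₁ i], ?_⟩
      rw [Finset.sum_insert hj, Finset.sum_insert hj]
      have hsum : ∑ i ∈ s, ((if i = j then (-1:ℝ) else ε₁ i) * a i) • e i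
          = ∑ i ∈ s, (ε₁ i * a i) • e i := by
        apply Finset.sum_congr rfl
        intro i hi
        rw [if_neg (by rintro rfl; exact hj hi)]
      beta_reduce
      rw [hsum, if_pos rfl]
      calc ‖w + ((θ j * a j) • e j + ∑ i ∈ s, (θ i * a i) • e i)‖
          = ‖(w + (θ j * a j) • e j) + ∑ i ∈ s, (θ i * a i) • e i‖ := by rw [add_assoc]
        _ ≤ ‖(w + (θ j * a j) • e j) + ∑ i ∈ s, (ε₁ i * a i) • e i‖ := hb₁
        _ = ‖u + θ j • v‖ := by rw [hu, hv, smul_smul]; congr 1; abel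
        _ ≤ max ‖u + v‖ ‖u - v‖ := hconv
        _ = ‖u - v‖ := max_eq_right hm
        _ = ‖w + ((-1 * a j) • e j + ∑ i ∈ s, (ε₁ i * a i) • e i)‖ := by
            rw [hu, hv, neg_one_mul, neg_smul]; congr 1; abel

lemma Phi_eq_sum_support (e : ℕ → Y) (c : ℕ →₀ ℤ) :
    Phi e c = ∑ i ∈ c.support, (c i : ℝ) • e i := rfl

lemma unconditional_bound {e : ℕ → Y} {C : ℝ} (hC : C ∈ ucSet e) (u v : ℕ →₀ ℤ)
    (h : ∀ i, (u i).natAbs ≤ (v i).natAbs) : ‖Phi e u‖ ≤ C * ‖Phi e v‖ := by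
  classical
  set s := v.support with hs
  set a : ℕ → ℝ := fun i => (v i : ℝ) with ha
  set θ : ℕ → ℝ := fun i => (u i : ℝ) / (v i : ℝ) with hθdef
  have hθ : ∀ i ∈ s, |θ i| ≤ 1 := by
    intro i hi
    have hvi : v i ≠ 0 := Finsupp.mem_support_iff.1 hi
    have hv0 : (0:ℝ) < |(v i : ℝ)| := by
      rw [← Int.cast_abs]
      exact_mod_cast abs_pos.2 hvi
    rw [hθdef]
    simp only [abs_div]
    rw [div_le_one hv0, ← Int.cast_abs, ← Int.cast_abs]
    have := h i
    rw [Int.abs_eq_natAbs, Int.abs_eq_natAbs]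
    exact_mod_cast this
  have hsupp : u.support ⊆ s := by
    intro i hi
    rw [Finsupp.mem_support_iff] at hi ⊢
    have := h i
    intro hv
    rw [hv] at this
    simp at this
    omega
  have hPhiu : Phi e u = ∑ i ∈ s, (θ i * a i) • e i := by
    rw [Phi_eq_sum_support]
    rw [Finset.sum_subset hsupp (by
      intro i _ hi
      rw [Finsupp.notMem_support_iff.1 hi]
      simp)]
    apply Finset.sum_congr rfl
    intro i hi
    have hvi : (v i : ℝ) ≠ 0 := by
      exact_mod_cast Finsupp.mem_support_iff.1 hi
    rw [hθdef, ha]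
    rw [div_mul_cancel₀ _ hvi]
  obtain ⟨ε, hε, hb⟩ := sign_lemma e a s θ hθ 0
  rw [hPhiu]
  calc ‖∑ i ∈ s, (θ i * a i) • e i‖ = ‖(0:Y) + ∑ i ∈ s, (θ i * a i) • e i‖ := by rw [zero_add]
    _ ≤ ‖(0:Y) + ∑ i ∈ s, (ε i * a i) • e i‖ := hb
    _ = ‖∑ i ∈ s, (ε i * a i) • e i‖ := by rw [zero_add]
    _ ≤ C * ‖∑ i ∈ s, a i • e i‖ := hC.2 a ε s hε
    _ = C * ‖Phi e v‖ := by rw [Phi_eq_sum_support]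

lemma sep_bound {e : ℕ → Y} (hnorm : ∀ i, ‖e i‖ = 1) {C : ℝ} (hC : C ∈ bcSet e)
    (v : ℕ →₀ ℤ) (hv : v ≠ 0) : 1 ≤ 2 * C * ‖Phi e v‖ := by
  obtain ⟨i, hi⟩ : ∃ i, v i ≠ 0 := by
    by_contra h
    push_neg at h
    exact hv (Finsupp.ext h)
  set a : ℕ → ℝ := fun j => (v j : ℝ) with ha
  set N := max (i + 1) (v.support.sup id + 1) with hN
  have hPN : ∑ j ∈ Finset.range N, a j • e j = Phi e v := by
    apply sum_range_eq_Phi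
    intro j hj
    have : j ≤ v.support.sup id := Finset.le_sup (f := id) (Finsupp.mem_support_iff.2 hj)
    omega
  have h1 : ‖∑ j ∈ Finset.range (i+1), a j • e j‖ ≤ C * ‖Phi e v‖ := by
    rw [← hPN]; exact hC.2 a (i+1) N (by omega) 
  have h2 : ‖∑ j ∈ Finset.range i, a j • e j‖ ≤ C * ‖Phi e v‖ := by
    rw [← hPN]; exact hC.2 a i N (by omega)
  have hterm : a i • e i = (∑ j ∈ Finset.range (i+1), a j • e j) - ∑ j ∈ Finset.range i, a j • e j := by
    rw [Finset.sum_range_succ]; abel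
  have hnorm1 : (1:ℝ) ≤ ‖a i • e i‖ := by
    rw [norm_smul, hnorm i, mul_one, Real.norm_eq_abs, ha]
    rw [← Int.cast_abs]
    have h5 : (0:ℤ) < |v i| := abs_pos.2 hi
    have : (1:ℤ) ≤ |v i| := by omega
    exact_mod_cast this
  calc (1:ℝ) ≤ ‖a i • e i‖ := hnorm1
    _ ≤ ‖∑ j ∈ Finset.range (i+1), a j • e j‖ + ‖∑ j ∈ Finset.range i, a j • e j‖ := by
        rw [hterm]; exact norm_sub_le _ _
    _ ≤ C * ‖Phi e v‖ + C * ‖Phi e v‖ := add_le_add h1 h2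
    _ = 2 * C * ‖Phi e v‖ := by ring

lemma layer_clamp_diff {t : ℕ} {a : ℕ →₀ ℤ} (ha : a ∈ layerS t) :
    ∃ (i : ℕ) (σ : ℤ), (σ = 1 ∨ σ = -1) ∧ a - clampF (BB t) a = Finsupp.single i σ := by
  set i := (Nat.unpair t).1 with hi
  have hoth : ∀ k, k ≠ i → (a k).natAbs ≤ BB t k := by
    intro k hk
    have h1 := ha.1 k
    rw [BB_succ_apply_ne t k (by rw [← hi]; exact hk)] at h1
    exact h1
  have hbad : ¬ (a i).natAbs ≤ BB t i := by
    intro h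
    apply ha.2
    intro k
    by_cases hk : k = i
    · subst hk; exact h
    · exact hoth k hk
  have h2 : BB (t+1) i = BB t i + 1 := by rw [hi]; exact BB_succ_apply_eq t
  have hbound : (a i).natAbs = BB t i + 1 := by
    have h1 := ha.1 i
    rw [h2] at h1
    omega
  refine ⟨i, a i - mid (a i) (BB t i), by simp [mid]; omega, ?_⟩
  ext k
  by_cases hk : k = i
  · subst hk
    rw [Finsupp.sub_apply, clampF_apply, Finsupp.single_eq_same]
  · rw [Finsupp.sub_apply, clampF_apply, Finsupp.single_eq_of_ne' (Ne.symm hk)]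
    have := hoth k hk
    simp [mid]
    omega

lemma phiF_lip {e : ℕ → Y} (hnorm : ∀ i, ‖e i‖ = 1) {Cu Cb : ℝ}
    (hCu : Cu ∈ ucSet e) (hCb : Cb ∈ bcSet e) (n : ℕ) (x y : ℕ →₀ ℤ) :
    ‖Phi e (phiF n x) - Phi e (phiF n y)‖ ≤ (Cu + 2 * Cb) * ‖Phi e x - Phi e y‖ := by
  classical
  by_cases hxy : x = y
  · subst hxy
    simp only [sub_self, norm_zero, mul_zero]
    exact le_refl 0
  set d := ‖Phi e x - Phi e y‖ with hd
  have hsep : 1 ≤ 2 * Cb * d := by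
    rw [hd, ← Phi_sub]
    exact sep_bound hnorm hCb (x - y) (sub_ne_zero.2 hxy)
  have hd0 : 0 ≤ d := norm_nonneg _
  have hclamp : ∀ b : ℕ →₀ ℕ, ‖Phi e (clampF b x) - Phi e (clampF b y)‖ ≤ Cu * d := by
    intro b
    rw [← Phi_sub, hd, ← Phi_sub]
    exact unconditional_bound hCu _ _ (fun i => by
      rw [Finsupp.sub_apply, Finsupp.sub_apply]
      exact clampF_diff_le b x y i)
  have hlayer1 : ∀ z : ℕ →₀ ℤ, z ∈ AnL n →
      ‖Phi e z - Phi e (clampF (BB (tn n)) z)‖ ≤ 2 * Cb * d := by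
    intro z hz
    obtain ⟨i, σ, hσ, hdiff⟩ := layer_clamp_diff (AnL_subset_layer hz)
    rw [← Phi_sub, hdiff, Phi_single]
    have : ‖(σ:ℝ) • e i‖ = 1 := by
      rw [norm_smul, hnorm i, mul_one, Real.norm_eq_abs]
      rcases hσ with rfl | rfl <;> norm_num
    rw [this]
    exact hsep
  have hineq : Cu * d ≤ (Cu + 2 * Cb) * d := by nlinarith
  have hphix : phiF n x = if clampF (BB (tn n + 1)) x ∈ AnL n then clampF (BB (tn n + 1)) x
      else clampF (BB (tn n)) x := rfl
  have hphiy : phiF n y = if clampF (BB (tn n + 1)) y ∈ AnL n then clampF (BB (tn n + 1)) y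
      else clampF (BB (tn n)) y := rfl
  rw [hphix, hphiy]
  by_cases hx : clampF (BB (tn n + 1)) x ∈ AnL n <;>
    by_cases hy : clampF (BB (tn n + 1)) y ∈ AnL n
  · rw [if_pos hx, if_pos hy]
    exact le_trans (hclamp _) hineq
  · rw [if_pos hx, if_neg hy]
    calc ‖Phi e (clampF (BB (tn n + 1)) x) - Phi e (clampF (BB (tn n)) y)‖
        ≤ ‖Phi e (clampF (BB (tn n + 1)) x) - Phi e (clampF (BB (tn n)) (clampF (BB (tn n + 1)) x))‖
          + ‖Phi e (clampF (BB (tn n)) (clampF (BB (tn n + 1)) x)) - Phi e (clampF (BB (tn n)) y)‖ :=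
          norm_sub_le_norm_sub_add_norm_sub _ _ _
      _ ≤ 2 * Cb * d + Cu * d := by
          apply add_le_add
          · exact hlayer1 _ hx
          · rw [clampF_clampF (fun i => BB_le_succ (tn n) i)]
            exact hclamp _
      _ = (Cu + 2 * Cb) * d := by ring
  · rw [if_neg hx, if_pos hy]
    calc ‖Phi e (clampF (BB (tn n)) x) - Phi e (clampF (BB (tn n + 1)) y)‖
        ≤ ‖Phi e (clampF (BB (tn n)) x) - Phi e (clampF (BB (tn n)) (clampF (BB (tn n + 1)) y))‖
          + ‖Phi e (clampF (BB (tn n)) (clampF (BB (tn n + 1)) y)) - Phi e (clampF (BB (tn n + 1)) y)‖ :=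
          norm_sub_le_norm_sub_add_norm_sub _ _ _
      _ ≤ Cu * d + 2 * Cb * d := by
          apply add_le_add
          · rw [clampF_clampF (fun i => BB_le_succ (tn n) i)]
            exact hclamp _
          · rw [norm_sub_rev]
            exact hlayer1 _ hy
      _ = (Cu + 2 * Cb) * d := by ring
  · rw [if_neg hx, if_neg hy]
    exact le_trans (hclamp _) hineq

end Estimates

section Constants
open BoundedContinuousFunction
variable {Y : Type*} [NormedAddCommGroup Y] [NormedSpace ℝ Y] [CompleteSpace Y]

noncomputable def psum (e : ℕ → Y) (a : ℕ → ℝ) (n : ℕ) : Y := ∑ i ∈ Finset.range n, a i • e i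

lemma psum_add (e : ℕ → Y) (a b : ℕ → ℝ) (n : ℕ) :
    psum e (a + b) n = psum e a n + psum e b n := by
  simp [psum, ← Finset.sum_add_distrib, add_smul]

lemma psum_smul (e : ℕ → Y) (r : ℝ) (a : ℕ → ℝ) (n : ℕ) :
    psum e (r • a) n = r • psum e a n := by
  simp [psum, Finset.smul_sum, smul_smul]

def Wsub (e : ℕ → Y) : Submodule ℝ (ℕ →ᵇ Y) where
  carrier := {g | (∃ a : ℕ → ℝ, ∀ n, g n = psum e a n) ∧
    ∃ y, Tendsto (fun n => g n) atTop (nhds y)}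
  add_mem' := by
    rintro g h ⟨⟨a, hga⟩, ⟨y, hgy⟩⟩ ⟨⟨b, hhb⟩, ⟨z, hhz⟩⟩
    refine ⟨⟨a + b, fun n => ?_⟩, ⟨y + z, ?_⟩⟩
    · rw [BoundedContinuousFunction.add_apply, hga n, hhb n, psum_add]
    · exact (hgy.add hhz).congr (fun n => (BoundedContinuousFunction.add_apply g h n).symm)
  zero_mem' := by
    refine ⟨⟨0, fun n => ?_⟩, ⟨0, ?_⟩⟩
    · simp [psum]
    · simp only [BoundedContinuousFunction.coe_zero, Pi.zero_apply]
      exact tendsto_const_nhds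
  smul_mem' := by
    rintro r g ⟨⟨a, hga⟩, ⟨y, hgy⟩⟩
    refine ⟨⟨r • a, fun n => ?_⟩, ⟨r • y, ?_⟩⟩
    · rw [BoundedContinuousFunction.coe_smul]
      simp only []
      rw [hga n, psum_smul]
    · refine (hgy.const_smul r).congr (fun n => ?_)
      rw [BoundedContinuousFunction.coe_smul]

lemma mem_Wsub {e : ℕ → Y} {g : ℕ →ᵇ Y} : g ∈ Wsub e ↔
    ((∃ a : ℕ → ℝ, ∀ n, g n = psum e a n) ∧ ∃ y, Tendsto (fun n => g n) atTop (nhds y)) :=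
  Iff.rfl

lemma mem_Wsub_of_parts {e : ℕ → Y} {g : ℕ →ᵇ Y} (h0 : g 0 = 0)
    (hstep : ∀ i, ∃ r : ℝ, g (i+1) - g i = r • e i)
    (hlim : ∃ y, Tendsto (fun n => g n) atTop (nhds y)) : g ∈ Wsub e := by
  refine ⟨⟨fun i => Classical.choose (hstep i), fun n => ?_⟩, hlim⟩
  have : psum e (fun i => Classical.choose (hstep i)) n
      = ∑ i ∈ Finset.range n, (g (i+1) - g i) := by
    apply Finset.sum_congr rfl
    intro i _
    exact (Classical.choose_spec (hstep i)).symm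
  rw [this, Finset.sum_range_sub (fun n => g n), h0, sub_zero]

lemma Wsub_closed (e : ℕ → Y) (hnorm : ∀ i, ‖e i‖ = 1) :
    IsClosed ((Wsub e : Set (ℕ →ᵇ Y))) := by
  apply IsSeqClosed.isClosed
  intro f g hf hfg
  have hpt : ∀ n, Tendsto (fun k => f k n) atTop (nhds (g n)) := by
    intro n
    rw [tendsto_iff_dist_tendsto_zero]
    have h1 : Tendsto (fun k => dist (f k) g) atTop (nhds 0) :=
      tendsto_iff_dist_tendsto_zero.1 hfg
    refine squeeze_zero (fun k => dist_nonneg) (fun k => dist_coe_le_dist n) h1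
  apply mem_Wsub_of_parts
  · -- g 0 = 0
    have h0 : ∀ k, f k 0 = 0 := by
      intro k
      obtain ⟨a, ha⟩ := (hf k).1
      rw [ha 0]
      simp [psum]
    have := hpt 0
    simp only [h0] at this
    exact tendsto_nhds_unique this tendsto_const_nhds
  · -- steps in span of e i
    intro i
    have hclosed : IsClosed (Set.range (fun r : ℝ => r • e i)) := by
      have hiso : Isometry (fun r : ℝ => r • e i) := by
        apply Isometry.of_dist_eq
        intro r s
        rw [dist_eq_norm, dist_eq_norm, ← sub_smul, norm_smul, hnorm i, mul_one,
          Real.norm_eq_abs]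
      exact hiso.isClosedEmbedding.isClosed_range
    have hmem : ∀ k, f k (i+1) - f k i ∈ Set.range (fun r : ℝ => r • e i) := by
      intro k
      obtain ⟨a, ha⟩ := (hf k).1
      refine ⟨a i, ?_⟩
      rw [ha (i+1), ha i]
      simp [psum, Finset.sum_range_succ]
    have hlim2 : Tendsto (fun k => f k (i+1) - f k i) atTop (nhds (g (i+1) - g i)) :=
      (hpt (i+1)).sub (hpt i)
    obtain ⟨r, hr⟩ := hclosed.mem_of_tendsto hlim2 (Eventually.of_forall hmem)
    exact ⟨r, hr.symm⟩
  · -- limit exists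
    have hgc : CauchySeq (fun n => g n) := by
      rw [Metric.cauchySeq_iff]
      intro ε hε
      obtain ⟨k, hk⟩ : ∃ k, dist (f k) g < ε/3 := by
        obtain ⟨N, hN⟩ := (Metric.tendsto_atTop.1 hfg) (ε/3) (by linarith)
        exact ⟨N, hN N le_rfl⟩
      obtain ⟨y, hy⟩ := (hf k).2
      obtain ⟨N, hN⟩ := Metric.cauchySeq_iff.1 hy.cauchySeq (ε/3) (by linarith)
      refine ⟨N, fun m hm n hn => ?_⟩
      have h1 : dist (g m) (f k m) ≤ dist (f k) g := by
        rw [dist_comm]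
        exact dist_coe_le_dist m
      have h2 : dist (f k n) (g n) ≤ dist (f k) g := dist_coe_le_dist n
      calc dist (g m) (g n)
          ≤ dist (g m) (f k m) + dist (f k m) (f k n) + dist (f k n) (g n) :=
            dist_triangle4 _ _ _ _
        _ < ε/3 + ε/3 + ε/3 := by
            have := hN m hm n hn
            linarith
        _ = ε := by ring
    exact cauchySeq_tendsto_of_complete hgc

noncomputable def Tfun (e : ℕ → Y) (g : Wsub e) : Y := Classical.choose g.2.2

lemma Tfun_spec (e : ℕ → Y) (g : Wsub e) :
    Tendsto (fun n => (g : ℕ →ᵇ Y) n) atTop (nhds (Tfun e g)) := Classical.choose_spec g.2.2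

noncomputable def TW (e : ℕ → Y) : Wsub e →L[ℝ] Y :=
  LinearMap.mkContinuous
    { toFun := Tfun e
      map_add' := by
        intro g h
        refine tendsto_nhds_unique (Tfun_spec e (g + h)) ?_
        have := (Tfun_spec e g).add (Tfun_spec e h)
        refine this.congr (fun n => ?_)
        rw [Submodule.coe_add, BoundedContinuousFunction.add_apply]
      map_smul' := by
        intro r g
        refine tendsto_nhds_unique (Tfun_spec e (r • g)) ?_
        have := (Tfun_spec e g).const_smul r
        refine this.congr (fun n => ?_)
        rw [Submodule.coe_smul, BoundedContinuousFunction.coe_smul] }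
    1
    (by
      intro g
      rw [one_mul]
      refine le_of_tendsto (Tfun_spec e g).norm ?_
      exact Eventually.of_forall (fun n => norm_coe_le_norm _ n))

lemma TW_apply (e : ℕ → Y) (g : Wsub e) : TW e g = Tfun e g := rfl

lemma TW_tendsto (e : ℕ → Y) (g : Wsub e) :
    Tendsto (fun n => (g : ℕ →ᵇ Y) n) atTop (nhds (TW e g)) := Tfun_spec e g

/-- Build an element of `Wsub e` from a convergent coefficient sequence. -/
noncomputable def mkW (e : ℕ → Y) (a : ℕ → ℝ) (y : Y)
    (h : Tendsto (fun n => psum e a n) atTop (nhds y)) : Wsub e := by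
  refine ⟨⟨⟨fun n => psum e a n, continuous_of_discreteTopology⟩, ?_⟩, ⟨a, fun n => rfl⟩, ⟨y, h⟩⟩
  obtain ⟨C, hC⟩ := Metric.isBounded_iff.1 (Metric.isBounded_range_of_tendsto _ h)
  exact ⟨C, fun m n => hC (Set.mem_range_self m) (Set.mem_range_self n)⟩

lemma mkW_apply (e : ℕ → Y) (a : ℕ → ℝ) (y : Y) (h) (n : ℕ) :
    ((mkW e a y h : Wsub e) : ℕ →ᵇ Y) n = psum e a n := rfl

lemma TW_mkW (e : ℕ → Y) (a : ℕ → ℝ) (y : Y) (h) : TW e (mkW e a y h) = y :=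
  tendsto_nhds_unique (TW_tendsto e (mkW e a y h)) h

lemma exists_uniform_bound (e : ℕ → Y) (hnorm : ∀ i, ‖e i‖ = 1) (hb : IsSchauderBasis e) :
    ∃ C : ℝ, 0 ≤ C ∧ ∀ (a : ℕ → ℝ) (y : Y),
      Tendsto (fun n => psum e a n) atTop (nhds y) → ∀ m, ‖psum e a m‖ ≤ C * ‖y‖ := by
  haveI : CompleteSpace (Wsub e) := (Wsub_closed e hnorm).completeSpace_coe
  have hker : (TW e).ker = ⊥ := by
    rw [LinearMap.ker_eq_bot']
    intro g hg
    obtain ⟨a, ha⟩ := g.2.1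
    have htend : Tendsto (fun n => psum e a n) atTop (nhds 0) := by
      have := TW_tendsto e g
      rw [show TW e g = 0 from hg] at this
      exact this.congr (fun n => ha n)
    obtain ⟨u, hu, huniq⟩ := hb 0
    have h1 : a = u := huniq a htend
    have h2 : (0 : ℕ → ℝ) = u := huniq 0 (by
      refine tendsto_const_nhds.congr (fun n => ?_)
      simp [psum])
    have ha0 : a = 0 := by rw [h1, ← h2]
    apply Subtype.ext
    apply BoundedContinuousFunction.ext
    intro n
    rw [ha n, ha0]
    simp [psum]
  have hran : (TW e).range = ⊤ := by
    rw [LinearMap.range_eq_top]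
    intro y
    obtain ⟨a, ha, _⟩ := hb y
    exact ⟨mkW e a y ha, TW_mkW e a y ha⟩
  set equ := ContinuousLinearEquiv.ofBijective (TW e) hker hran with hequ
  set C := max ‖(equ.symm : Y →L[ℝ] Wsub e)‖ 0 with hC
  refine ⟨C, le_max_right _ _, ?_⟩
  intro a y hay m
  set g := mkW e a y hay with hg
  have hsymm : equ.symm y = g := by
    rw [ContinuousLinearEquiv.symm_apply_eq]
    have : equ g = TW e g := rfl
    rw [this, TW_mkW]
  have h1 : ‖psum e a m‖ ≤ ‖(g : ℕ →ᵇ Y)‖ := by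
    have := norm_coe_le_norm (g : ℕ →ᵇ Y) m
    rwa [mkW_apply] at this
  have h2 : ‖(g : ℕ →ᵇ Y)‖ = ‖equ.symm y‖ := by rw [hsymm]; rfl
  have h3 : ‖equ.symm y‖ ≤ ‖(equ.symm : Y →L[ℝ] Wsub e)‖ * ‖y‖ :=
    (equ.symm : Y →L[ℝ] Wsub e).le_opNorm y
  have h4 : ‖(equ.symm : Y →L[ℝ] Wsub e)‖ * ‖y‖ ≤ C * ‖y‖ := by
    apply mul_le_mul_of_nonneg_right (le_max_left _ _) (norm_nonneg y)
  calc ‖psum e a m‖ ≤ ‖(g : ℕ →ᵇ Y)‖ := h1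
    _ = ‖equ.symm y‖ := h2
    _ ≤ ‖(equ.symm : Y →L[ℝ] Wsub e)‖ * ‖y‖ := h3
    _ ≤ C * ‖y‖ := h4

lemma psum_truncate (e : ℕ → Y) (a : ℕ → ℝ) (s : Finset ℕ) :
    Tendsto (fun n => psum e (fun i => if i ∈ s then a i else 0) n) atTop
      (nhds (∑ i ∈ s, a i • e i)) := by
  have hev : ∀ N, s.sup id + 1 ≤ N →
      psum e (fun i => if i ∈ s then a i else 0) N = ∑ i ∈ s, a i • e i := by
    intro N hN
    have hsub : s ⊆ Finset.range N := by
      intro i hi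
      rw [Finset.mem_range]
      have : i ≤ s.sup id := Finset.le_sup (f := id) hi
      omega
    rw [psum]
    rw [← Finset.sum_subset hsub (fun i _ hi => by rw [if_neg hi, zero_smul])]
    apply Finset.sum_congr rfl
    intro i hi
    rw [if_pos hi]
  have : (fun n => psum e (fun i => if i ∈ s then a i else 0) n)
      =ᶠ[atTop] (fun _ => ∑ i ∈ s, a i • e i) := by
    filter_upwards [eventually_ge_atTop (s.sup id + 1)] with N hN
    exact hev N hN
  exact Tendsto.congr' this.symm tendsto_const_nhds

lemma bcSet_nonempty (e : ℕ → Y) (hnorm : ∀ i, ‖e i‖ = 1) (hb : IsSchauderBasis e) :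
    (bcSet e).Nonempty := by
  obtain ⟨C, hC0, hC⟩ := exists_uniform_bound e hnorm hb
  refine ⟨C, hC0, ?_⟩
  intro a m n hmn
  have htr := psum_truncate e a (Finset.range n)
  have hsum_eq : ∑ i ∈ Finset.range n, a i • e i = psum e a n := rfl
  have h1 := hC _ _ htr m
  have h2 : psum e (fun i => if i ∈ Finset.range n then a i else 0) m = psum e a m := by
    rw [psum, psum]
    apply Finset.sum_congr rfl
    intro i hi
    rw [if_pos (by rw [Finset.mem_range] at hi ⊢; omega)]
  rw [h2] at h1
  exact h1

lemma summable_bound {c : ℕ → Y} (h : Summable c) :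
    ∃ R : ℝ, ∀ t : Finset ℕ, ‖∑ i ∈ t, c i‖ ≤ R := by
  obtain ⟨L, hL⟩ := h
  have := Metric.tendsto_nhds.1 hL 1 one_pos
  obtain ⟨s₀, hs₀⟩ := eventually_atTop.1 this
  refine ⟨‖L‖ + 1 + ∑ i ∈ s₀, ‖c i‖, fun t => ?_⟩
  have hdisj : Disjoint t (s₀ \ t) := Finset.disjoint_sdiff
  have hun : t ∪ (s₀ \ t) = t ∪ s₀ := Finset.union_sdiff_self_eq_union
  have hsplit : ∑ i ∈ t ∪ s₀, c i = ∑ i ∈ t, c i + ∑ i ∈ s₀ \ t, c i := by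
    rw [← hun, Finset.sum_union hdisj]
  have hbig : ‖∑ i ∈ t ∪ s₀, c i‖ ≤ ‖L‖ + 1 := by
    have hd := hs₀ (t ∪ s₀) Finset.subset_union_right
    rw [dist_eq_norm] at hd
    calc ‖∑ i ∈ t ∪ s₀, c i‖ = ‖L + (∑ i ∈ t ∪ s₀, c i - L)‖ := by rw [add_sub_cancel]
      _ ≤ ‖L‖ + ‖∑ i ∈ t ∪ s₀, c i - L‖ := norm_add_le _ _
      _ ≤ ‖L‖ + 1 := by linarith
  have hsmall : ‖∑ i ∈ s₀ \ t, c i‖ ≤ ∑ i ∈ s₀, ‖c i‖ := by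
    calc ‖∑ i ∈ s₀ \ t, c i‖ ≤ ∑ i ∈ s₀ \ t, ‖c i‖ := norm_sum_le _ _
      _ ≤ ∑ i ∈ s₀, ‖c i‖ := Finset.sum_le_sum_of_subset_of_nonneg
          (Finset.sdiff_subset) (fun i _ _ => norm_nonneg _)
  calc ‖∑ i ∈ t, c i‖ = ‖∑ i ∈ t ∪ s₀, c i - ∑ i ∈ s₀ \ t, c i‖ := by
        rw [hsplit]; congr 1; abel
    _ ≤ ‖∑ i ∈ t ∪ s₀, c i‖ + ‖∑ i ∈ s₀ \ t, c i‖ := norm_sub_le _ _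
    _ ≤ ‖L‖ + 1 + ∑ i ∈ s₀, ‖c i‖ := by linarith

lemma ucSet_nonempty (e : ℕ → Y) (hnorm : ∀ i, ‖e i‖ = 1)
    (hb : IsUnconditionalSchauderBasis e) : (ucSet e).Nonempty := by
  classical
  obtain ⟨C, hC0, hC⟩ := exists_uniform_bound e hnorm hb.1
  set coeff : Y → ℕ → ℝ := fun y => Classical.choose (hb.1 y).exists with hcoeffdef
  have hcoeff : ∀ y, Tendsto (fun n => psum e (coeff y) n) atTop (nhds y) :=
    fun y => Classical.choose_spec (hb.1 y).exists
  have huniq : ∀ (y : Y) (a : ℕ → ℝ),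
      Tendsto (fun n => psum e a n) atTop (nhds y) → coeff y = a := by
    intro y a ha
    obtain ⟨u, hu, huu⟩ := hb.1 y
    rw [huu (coeff y) (hcoeff y), huu a ha]
  have hadd : ∀ y z, coeff (y + z) = coeff y + coeff z := by
    intro y z
    apply huniq
    refine ((hcoeff y).add (hcoeff z)).congr (fun n => ?_)
    rw [psum_add]
  have hsmul : ∀ (r : ℝ) y, coeff (r • y) = r • coeff y := by
    intro r y
    apply huniq
    refine ((hcoeff y).const_smul r).congr (fun n => ?_)
    rw [psum_smul]
  have hcb : ∀ (y : Y) (i : ℕ), ‖coeff y i‖ ≤ (2*C) * ‖y‖ := by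
    intro y i
    have h1 : coeff y i • e i = psum e (coeff y) (i+1) - psum e (coeff y) i := by
      rw [psum, psum, Finset.sum_range_succ]
      abel
    have h2 : ‖coeff y i • e i‖ ≤ C * ‖y‖ + C * ‖y‖ := by
      rw [h1]
      calc ‖psum e (coeff y) (i+1) - psum e (coeff y) i‖
          ≤ ‖psum e (coeff y) (i+1)‖ + ‖psum e (coeff y) i‖ := norm_sub_le _ _
        _ ≤ C * ‖y‖ + C * ‖y‖ := add_le_add (hC _ _ (hcoeff y) _) (hC _ _ (hcoeff y) _)
    rw [norm_smul, hnorm i, mul_one] at h2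
    linarith
  set F : ℕ → Y →L[ℝ] ℝ := fun i => LinearMap.mkContinuous
    ⟨⟨fun y => coeff y i, fun y z => by show coeff (y + z) i = _; rw [hadd]; rfl⟩,
      fun r y => by show coeff (r • y) i = _; rw [hsmul]; rfl⟩ (2*C) (fun y => hcb y i) with hF
  have hFapply : ∀ i y, F i y = coeff y i := fun i y => rfl
  set G : {p : Finset ℕ × (ℕ → ℝ) // ∀ i, p.2 i = 1 ∨ p.2 i = -1} → Y →L[ℝ] Y :=
    fun p => ∑ i ∈ p.1.1, p.1.2 i • ((F i).smulRight (e i)) with hG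
  have hGapply : ∀ p y, G p y = ∑ i ∈ p.1.1, p.1.2 i • (coeff y i • e i) := by
    intro p y
    rw [hG]
    simp only [ContinuousLinearMap.coe_sum', Finset.sum_apply,
      ContinuousLinearMap.coe_smul', Pi.smul_apply, ContinuousLinearMap.smulRight_apply,
      hFapply]
  have hpt : ∀ y : Y, ∃ Cy, ∀ p, ‖G p y‖ ≤ Cy := by
    intro y
    obtain ⟨R, hR⟩ := summable_bound (hb.2 (coeff y) y (hcoeff y))
    refine ⟨R + R, fun p => ?_⟩
    rw [hGapply]
    obtain ⟨⟨s, ε⟩, hε⟩ := p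
    simp only []
    have hsplit : ∑ i ∈ s, ε i • (coeff y i • e i)
        = (∑ i ∈ s.filter (fun i => ε i = 1), coeff y i • e i)
          - ∑ i ∈ s.filter (fun i => ¬ ε i = 1), coeff y i • e i := by
      rw [← Finset.sum_filter_add_sum_filter_not s (fun i => ε i = 1)
        (fun i => ε i • (coeff y i • e i))]
      rw [sub_eq_add_neg, ← Finset.sum_neg_distrib]
      congr 1
      · apply Finset.sum_congr rfl
        intro i hi
        rw [(Finset.mem_filter.1 hi).2, one_smul]
      · apply Finset.sum_congr rfl
        intro i hi
        have h2 := (Finset.mem_filter.1 hi).2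
        have h3 : ε i = -1 := by
          rcases hε i with h | h
          · exact absurd h h2
          · exact h
        rw [h3, neg_one_smul]
    rw [hsplit]
    calc ‖_ - _‖ ≤ ‖∑ i ∈ s.filter (fun i => ε i = 1), coeff y i • e i‖
          + ‖∑ i ∈ s.filter (fun i => ¬ ε i = 1), coeff y i • e i‖ := norm_sub_le _ _
      _ ≤ R + R := add_le_add (hR _) (hR _)
  obtain ⟨C', hC'⟩ := banach_steinhaus hpt
  refine ⟨max C' 0, le_max_right _ _, ?_⟩
  intro a ε s hε
  set y := ∑ i ∈ s, a i • e i with hy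
  have hcy : coeff y = fun i => if i ∈ s then a i else 0 :=
    huniq y _ (psum_truncate e a s)
  have happly : G ⟨(s, ε), hε⟩ y = ∑ i ∈ s, (ε i * a i) • e i := by
    rw [hGapply]
    apply Finset.sum_congr rfl
    intro i hi
    rw [hcy]
    simp only [if_pos hi]
    rw [smul_smul]
  have hb1 : ‖G ⟨(s, ε), hε⟩ y‖ ≤ C' * ‖y‖ :=
    le_trans ((G ⟨(s, ε), hε⟩).le_opNorm y) (by
      apply mul_le_mul_of_nonneg_right (hC' _) (norm_nonneg _))
  rw [happly] at hb1
  calc ‖∑ i ∈ s, (ε i * a i) • e i‖ ≤ C' * ‖y‖ := hb1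
    _ ≤ max C' 0 * ‖y‖ := mul_le_mul_of_nonneg_right (le_max_left _ _) (norm_nonneg _)

end Constants


section Final
variable {Y : Type*} [NormedAddCommGroup Y] [NormedSpace ℝ Y] [CompleteSpace Y]

lemma grid_closed (e : ℕ → Y) (hnorm : ∀ i, ‖e i‖ = 1) {Cb : ℝ} (hCb : Cb ∈ bcSet e) :
    IsClosed (integerGrid e) := by
  have hCbpos : 0 < Cb := by
    have h1 := sep_bound hnorm hCb (Finsupp.single 0 1)
      (by
        intro h
        have h0 := Finsupp.ext_iff.1 h 0
        rw [Finsupp.single_eq_same] at h0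
        exact one_ne_zero h0)
    rw [Phi_single, Int.cast_one, one_smul, hnorm 0] at h1
    nlinarith
  apply IsSeqClosed.isClosed
  intro x p hx hlim
  choose c hc using fun k => grid_surj hnorm (x k) (hx k)
  obtain ⟨N, hN⟩ := Metric.cauchySeq_iff.1 hlim.cauchySeq (1/(2*Cb)) (by positivity)
  have hconst : ∀ k, N ≤ k → x k = x N := by
    intro k hk
    by_contra hne
    have hcne : c k - c N ≠ 0 := by
      intro h0
      apply hne
      rw [sub_eq_zero] at h0
      rw [← hc k, ← hc N, h0]
    have hs := sep_bound hnorm hCb (c k - c N) hcne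
    rw [Phi_sub, hc k, hc N] at hs
    have hd := hN k hk N le_rfl
    rw [dist_eq_norm] at hd
    have h2 : 2 * Cb * ‖x k - x N‖ < 2 * Cb * (1/(2*Cb)) :=
      mul_lt_mul_of_pos_left hd (by positivity)
    have h3 : 2 * Cb * (1/(2*Cb)) = 1 := by field_simp
    linarith
  have hxt : Filter.Tendsto x Filter.atTop (nhds (x N)) := by
    refine tendsto_const_nhds.congr' ?_
    filter_upwards [Filter.eventually_ge_atTop N] with k hk
    exact (hconst k hk).symm
  rw [tendsto_nhds_unique hlim hxt]
  exact hx N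

lemma le_inf_combo {U B : Set ℝ} (hU : U.Nonempty) (hB : B.Nonempty) {D d : ℝ}
    (hd : 0 ≤ d) (h : ∀ Cu ∈ U, ∀ Cb ∈ B, D ≤ (Cu + 2 * Cb) * d) :
    D ≤ (sInf U + 2 * sInf B) * d := by
  rcases eq_or_lt_of_le hd with hd0 | hd0
  · obtain ⟨Cu, hCu⟩ := hU
    obtain ⟨Cb, hCb⟩ := hB
    have := h Cu hCu Cb hCb
    rw [← hd0] at this ⊢
    simpa using this
  · have step1 : ∀ Cu ∈ U, D ≤ (Cu + 2 * sInf B) * d := by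
      intro Cu hCu
      have h2 : ∀ Cb ∈ B, (D - Cu * d) / (2 * d) ≤ Cb := by
        intro Cb hCb
        have := h Cu hCu Cb hCb
        rw [div_le_iff₀ (by positivity)]
        nlinarith
      have h4 := le_csInf hB h2
      rw [div_le_iff₀ (by positivity)] at h4
      nlinarith
    have h3 : ∀ Cu ∈ U, (D - 2 * sInf B * d) / d ≤ Cu := by
      intro Cu hCu
      have := step1 Cu hCu
      rw [div_le_iff₀ hd0]
      nlinarith
    have h5 := le_csInf hU h3
    rw [div_le_iff₀ hd0] at h5
    nlinarith

end Final


/-- For the integer grid `M = M(E)` of a normalized unconditional basis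
`E` of a Banach space, there are distinct points `μ n ∈ M` and retractions `φ n : M → M`
onto `{μ 0, …, μ n}`, with `⋃ {μ n}` dense in `M`, each `φ n` Lipschitz with constant
`uc(E) + 2 bc(E)`, and `φ m ∘ φ n = φ n ∘ φ m = φ n` for `n ≤ m`. -/
theorem stmt_15 (Y : Type) [NormedAddCommGroup Y] [NormedSpace ℝ Y] [CompleteSpace Y]
    (e : ℕ → Y) (hnorm : ∀ i : ℕ, ‖e i‖ = 1)
    (hbasis : IsUnconditionalSchauderBasis e) :
    ∃ (μ : ℕ → ↥(integerGrid e)) (φ : ℕ → (↥(integerGrid e) → ↥(integerGrid e))),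
      Function.Injective μ ∧
      (∀ n : ℕ, Set.range (φ n) = μ '' Set.Iic n) ∧
      (∀ n : ℕ, ∀ j ≤ n, φ n (μ j) = μ j) ∧
      closure (Subtype.val '' Set.range μ) = integerGrid e ∧
      (∀ (n : ℕ) (x y : ↥(integerGrid e)),
        dist (φ n x) (φ n y) ≤ (unconditionalConstant e + 2 * basisConstant e) * dist x y) ∧
      (∀ m n : ℕ, n ≤ m → φ m ∘ φ n = φ n ∧ φ n ∘ φ m = φ n) := by
  have hBne : (bcSet e).Nonempty := bcSet_nonempty e hnorm hbasis.1
  have hUne : (ucSet e).Nonempty := ucSet_nonempty e hnorm hbasis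
  set f : (ℕ →₀ ℤ) → ↥(integerGrid e) := fun c => ⟨Phi e c, Phi_mem e c⟩ with hf
  have hfinj : Function.Injective f := fun c d h => Phi_inj hbasis.1 (Subtype.ext_iff.1 h)
  have hfsurj : Function.Surjective f := by
    rintro ⟨x, hx⟩
    obtain ⟨c, hc⟩ := grid_surj hnorm x hx
    exact ⟨c, Subtype.ext hc⟩
  set g := Equiv.ofBijective f ⟨hfinj, hfsurj⟩ with hg
  have hgval : ∀ c, (g c : Y) = Phi e c := fun c => rfl
  set μ : ℕ → ↥(integerGrid e) := fun n => g (muF n) with hμ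
  set φ : ℕ → (↥(integerGrid e) → ↥(integerGrid e)) :=
    fun n x => g (phiF n (g.symm x)) with hφ
  have hφfix : ∀ n j, j ≤ n → φ n (μ j) = μ j := by
    intro n j hj
    show g (phiF n (g.symm (g (muF j)))) = g (muF j)
    rw [Equiv.symm_apply_apply]
    congr 1
    exact phiF_fixes (SS_mono hj (muF_mem_SS j))
  refine ⟨μ, φ, ?_, ?_, ?_, ?_, ?_, ?_⟩
  · exact g.injective.comp muF_injective
  · intro n
    ext x
    constructor
    · rintro ⟨z, rfl⟩
      have hmem : phiF n (g.symm z) ∈ SS n := phiF_mem_SS n (g.symm z)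
      rw [SS_eq_image] at hmem
      obtain ⟨j, hj, hjeq⟩ := hmem
      refine ⟨j, hj, ?_⟩
      show g (muF j) = g (phiF n (g.symm z))
      rw [hjeq]
    · rintro ⟨j, hj, rfl⟩
      exact ⟨μ j, hφfix n j hj⟩
  · exact fun n j hj => hφfix n j hj
  · have hrange : Set.range μ = Set.univ :=
      Set.range_eq_univ.2 (g.surjective.comp muF_surjective)
    rw [hrange, Set.image_univ, Subtype.range_coe]
    obtain ⟨Cb, hCb⟩ := hBne
    exact (grid_closed e hnorm hCb).closure_eq
  · intro n x y
    have hdist1 : dist (φ n x) (φ n y)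
        = ‖Phi e (phiF n (g.symm x)) - Phi e (phiF n (g.symm y))‖ := by
      rw [Subtype.dist_eq, dist_eq_norm]
      show ‖(g (phiF n (g.symm x)) : Y) - (g (phiF n (g.symm y)) : Y)‖ = _
      rw [hgval, hgval]
    have hdist2 : dist x y = ‖Phi e (g.symm x) - Phi e (g.symm y)‖ := by
      rw [Subtype.dist_eq, dist_eq_norm]
      have hxv : (x : Y) = Phi e (g.symm x) := by
        conv_lhs => rw [← g.apply_symm_apply x]
        exact hgval _
      have hyv : (y : Y) = Phi e (g.symm y) := by
        conv_lhs => rw [← g.apply_symm_apply y]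
        exact hgval _
      rw [hxv, hyv]
    rw [hdist1, hdist2, unconditionalConstant_eq, basisConstant_eq]
    exact le_inf_combo hUne hBne (norm_nonneg _)
      (fun Cu hCu Cb hCb => phiF_lip hnorm hCu hCb n (g.symm x) (g.symm y))
  · intro m n hnm
    constructor
    · funext x
      simp only [Function.comp_apply, hφ, Equiv.symm_apply_apply]
      exact congrArg g (congrFun (phiF_comp_ge hnm) (g.symm x))
    · funext x
      simp only [Function.comp_apply, hφ, Equiv.symm_apply_apply]
      exact congrArg g (congrFun (phiF_comp_le hnm) (g.symm x))
end

section
/- Let E = {e_i}_{i=1}^∞ be the canonical unit vector basis of c₀ and let M = M(E) ⊆ c₀ be the integer grid, i.e., the set of finitely supported integer-valued sequences. Then the Lipschitz-free space F(M) has a monotone Schauder basis (a Schauder basis with basis constant 1). -/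
open scoped NNReal ENNReal

/-- The Banach space `c₀` of real sequences vanishing at infinity. -/
abbrev CZero : Type := ZeroAtInftyContinuousMap ℕ ℝ

def Mgrid : Set CZero := {x : CZero | ∀ n : ℕ, ∃ k : ℤ, x n = (k : ℝ)}

abbrev P := ↥Mgrid

namespace Grid

lemma zero_mem : (0 : CZero) ∈ Mgrid := fun n => ⟨0, by simp⟩

instance : Zero P := ⟨⟨0, zero_mem⟩⟩

lemma coe_zero (n : ℕ) : ((0 : P) : CZero) n = 0 := rfl

noncomputable def ix (x : P) (n : ℕ) : ℤ := ⌊(x : CZero) n⌋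

lemma ix_coe (x : P) (n : ℕ) : ((ix x n : ℤ) : ℝ) = (x : CZero) n := by
  obtain ⟨k, hk⟩ := x.2 n
  rw [ix, hk]; simp

lemma ext_ix {x y : P} (h : ∀ n, ix x n = ix y n) : x = y := by
  apply Subtype.ext
  apply ZeroAtInftyContinuousMap.ext
  intro n
  rw [← ix_coe, ← ix_coe, h n]

lemma ix_zero (n : ℕ) : ix (0 : P) n = 0 := by
  have : ((ix (0:P) n : ℤ) : ℝ) = 0 := ix_coe 0 n
  exact_mod_cast this

lemma dist_def (x y : P) : dist x y = dist (x : CZero) y := Subtype.dist_eq x y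

lemma dist_le_iff {x y : P} {c : ℝ} (hc : 0 ≤ c) :
    dist x y ≤ c ↔ ∀ n, |((ix x n : ℤ) : ℝ) - (ix y n : ℝ)| ≤ c := by
  rw [dist_def, ← ZeroAtInftyContinuousMap.dist_toBCF_eq_dist,
    BoundedContinuousFunction.dist_le hc]
  constructor
  · intro h n; rw [ix_coe, ix_coe]; simpa [Real.dist_eq] using h n
  · intro h n; have := h n; rw [ix_coe, ix_coe] at this; simpa [Real.dist_eq] using this

lemma coord_le_dist (x y : P) (n : ℕ) :
    |((ix x n : ℤ) : ℝ) - (ix y n : ℝ)| ≤ dist x y := by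
  rw [ix_coe, ix_coe]
  have := @BoundedContinuousFunction.dist_coe_le_dist ℕ ℝ _ _
    (x : CZero).toBCF (y : CZero).toBCF n
  rw [ZeroAtInftyContinuousMap.dist_toBCF_eq_dist, ← dist_def] at this
  simpa [Real.dist_eq] using this

lemma one_le_dist {x y : P} (h : x ≠ y) : 1 ≤ dist x y := by
  have : ∃ n, ix x n ≠ ix y n := by
    by_contra hc; push_neg at hc; exact h (ext_ix hc)
  obtain ⟨n, hn⟩ := this
  calc (1 : ℝ) = ((1 : ℤ) : ℝ) := by norm_num
  _ ≤ ((|ix x n - ix y n| : ℤ) : ℝ) := by exact_mod_cast Int.one_le_abs (by omega)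
  _ = |((ix x n : ℤ) : ℝ) - (ix y n : ℝ)| := by push_cast; ring_nf
  _ ≤ dist x y := coord_le_dist x y n

lemma dist_nonneg' (x y : P) : (0:ℝ) ≤ dist x y := dist_nonneg

-- finite support
lemma supp_finite (x : P) : {n | ix x n ≠ 0}.Finite := by
  have h1 : Filter.Tendsto ((x : CZero) : ℕ → ℝ) Filter.cofinite (nhds 0) := by
    have := zero_at_infty (x : CZero)
    rwa [Filter.cocompact_eq_cofinite] at this
  have h2 : ∀ᶠ n in Filter.cofinite, |(x : CZero) n| < 1 := by
    have := Metric.tendsto_nhds.mp h1 1 one_pos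
    simpa [Real.dist_eq] using this
  have h3 : ∀ᶠ n in Filter.cofinite, ix x n = 0 := by
    filter_upwards [h2] with n hn
    have h4 : |((ix x n : ℤ) : ℝ)| < 1 := by rw [ix_coe]; exact hn
    have h5 : |ix x n| < 1 := by exact_mod_cast h4
    have h6 := abs_lt.mp h5
    omega
  simpa using Filter.eventually_cofinite.mp h3

noncomputable def supp (x : P) : Finset ℕ := (supp_finite x).toFinset

lemma mem_supp {x : P} {n : ℕ} : n ∈ supp x ↔ ix x n ≠ 0 := by
  simp [supp]


noncomputable def upd (x : P) (j : ℕ) (v : ℤ) : P :=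
  ⟨⟨⟨Function.update ((x : CZero) : ℕ → ℝ) j (v : ℝ), continuous_of_discreteTopology⟩, by
      rw [Filter.cocompact_eq_cofinite]
      have h0 : Filter.Tendsto ((x : CZero) : ℕ → ℝ) Filter.cofinite (nhds 0) := by
        have := zero_at_infty (x : CZero)
        rwa [Filter.cocompact_eq_cofinite] at this
      apply Filter.Tendsto.congr' _ h0
      apply Filter.eventually_cofinite.mpr
      apply Set.Finite.subset (Set.finite_singleton j)
      intro n hn
      simp only [Set.mem_setOf_eq] at hn
      by_contra hj
      exact hn (by rw [Function.update_of_ne (by simpa using hj)])⟩, by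
    intro n
    rcases eq_or_ne n j with rfl | h
    · exact ⟨v, by simp [Function.update_self]⟩
    · obtain ⟨k, hk⟩ := x.2 n
      exact ⟨k, by simpa [Function.update_of_ne h] using hk⟩⟩

lemma ix_upd (x : P) (j : ℕ) (v : ℤ) (n : ℕ) :
    ix (upd x j v) n = if n = j then v else ix x n := by
  rcases eq_or_ne n j with rfl | h
  · simp [ix, upd, Function.update_self]
  · simp [ix, upd, Function.update_of_ne h, h]

noncomputable def normZ (x : P) : ℕ := (supp x).sup (fun n => (ix x n).natAbs)

lemma natAbs_le_normZ (x : P) (n : ℕ) : (ix x n).natAbs ≤ normZ x := by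
  by_cases h : n ∈ supp x
  · exact Finset.le_sup (f := fun n => (ix x n).natAbs) h
  · have : ix x n = 0 := by by_contra hc; exact h (mem_supp.mpr hc)
    simp [this]

noncomputable def msupp (x : P) : ℕ := (supp x).sup id

lemma le_msupp {x : P} {n : ℕ} (h : n ∈ supp x) : n ≤ msupp x := Finset.le_sup (f := id) h

lemma supp_eq_empty_iff {x : P} : supp x = ∅ ↔ x = 0 := by
  constructor
  · intro h
    apply ext_ix
    intro n
    rw [ix_zero]
    by_contra hc
    have : n ∈ supp x := mem_supp.mpr hc
    simp [h] at this
  · intro h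
    subst h
    ext n
    simp [mem_supp, ix_zero]

lemma msupp_mem {x : P} (h : x ≠ 0) : msupp x ∈ supp x := by
  have hne : (supp x).Nonempty := by
    rw [Finset.nonempty_iff_ne_empty]; intro hc; exact h (supp_eq_empty_iff.mp hc)
  obtain ⟨i, hi, hval⟩ := Finset.exists_mem_eq_sup (supp x) hne id
  rw [msupp, hval]; exact hi

lemma normZ_mem {x : P} (h : x ≠ 0) :
    ∃ n ∈ supp x, (ix x n).natAbs = normZ x := by
  have hne : (supp x).Nonempty := by
    rw [Finset.nonempty_iff_ne_empty]; intro hc; exact h (supp_eq_empty_iff.mp hc)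
  obtain ⟨i, hi, hval⟩ := Finset.exists_mem_eq_sup (supp x) hne (fun n => (ix x n).natAbs)
  exact ⟨i, hi, hval.symm⟩

lemma normZ_pos {x : P} (h : x ≠ 0) : 1 ≤ normZ x := by
  obtain ⟨n, hn, hval⟩ := normZ_mem h
  have := mem_supp.mp hn
  omega

noncomputable def blk (x : P) : ℕ := max (msupp x + 1) (normZ x)

def stage1 (x : P) : Prop := msupp x + 2 ≤ normZ x

noncomputable instance : DecidablePred stage1 := fun x => inferInstanceAs (Decidable (_ ≤ _))

noncomputable def maxset (x : P) : Finset ℕ :=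
  (supp x).filter (fun n => (ix x n).natAbs = normZ x)

noncomputable def jx (x : P) : ℕ :=
  if stage1 x then (maxset x).min.getD 0 else msupp x

noncomputable def cnt (x : P) : ℕ := (maxset x).card

noncomputable def idx (x : P) : ℕ :=
  if stage1 x then cnt x else (blk x - 1) + (ix x (msupp x)).natAbs

open Classical in
noncomputable def kappa (x : P) : ℕ :=
  if x = 0 then 0 else blk x * blk x + idx x


-- chunk 3: kappa facts
lemma normZ_le_blk (x : P) : normZ x ≤ blk x := le_max_right _ _

lemma msupp_lt_blk (x : P) : msupp x + 1 ≤ blk x := le_max_left _ _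

lemma blk_pos (x : P) : 1 ≤ blk x := le_trans (by omega) (msupp_lt_blk x)

lemma maxset_nonempty {x : P} (h : x ≠ 0) : (maxset x).Nonempty := by
  obtain ⟨n, hn, hv⟩ := normZ_mem h
  exact ⟨n, Finset.mem_filter.mpr ⟨hn, hv⟩⟩

lemma jx_mem_maxset {x : P} (h : x ≠ 0) (hs : stage1 x) : jx x ∈ maxset x := by
  have hne := maxset_nonempty h
  rw [jx, if_pos hs, ← Finset.coe_min' hne]
  exact Finset.min'_mem _ hne

lemma jx_mem_supp {x : P} (h : x ≠ 0) : jx x ∈ supp x := by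
  by_cases hs : stage1 x
  · exact (Finset.mem_filter.mp (jx_mem_maxset h hs)).1
  · rw [jx, if_neg hs]; exact msupp_mem h

lemma stage1_blk {x : P} (hs : stage1 x) : blk x = normZ x := by
  have := hs; rw [stage1] at this; rw [blk]; omega

lemma nonstage_blk {x : P} (h : x ≠ 0) (hs : ¬ stage1 x) : blk x = msupp x + 1 := by
  rw [stage1, not_le] at hs; rw [blk]; omega

lemma supp_subset_range (x : P) : supp x ⊆ Finset.range (msupp x + 1) := by
  intro n hn; rw [Finset.mem_range]; have := le_msupp hn; omega

lemma cnt_le (x : P) : cnt x ≤ msupp x + 1 := by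
  calc cnt x ≤ (Finset.range (msupp x + 1)).card := by
        apply Finset.card_le_card
        exact le_trans (Finset.filter_subset _ _) (supp_subset_range x)
  _ = msupp x + 1 := Finset.card_range _

lemma cnt_pos {x : P} (h : x ≠ 0) : 1 ≤ cnt x :=
  Finset.card_pos.mpr (maxset_nonempty h)

lemma idx_pos {x : P} (h : x ≠ 0) : 1 ≤ idx x := by
  rw [idx]
  by_cases hs : stage1 x
  · rw [if_pos hs]; exact cnt_pos h
  · rw [if_neg hs]
    have h1 : ix x (msupp x) ≠ 0 := mem_supp.mp (msupp_mem h)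
    have : 1 ≤ (ix x (msupp x)).natAbs := by omega
    omega

lemma idx_le {x : P} (h : x ≠ 0) : idx x ≤ 2 * blk x - 1 := by
  rw [idx]
  by_cases hs : stage1 x
  · rw [if_pos hs]
    have h1 := cnt_le x
    have h2 := msupp_lt_blk x
    have h3 := hs; rw [stage1] at h3
    have h4 := stage1_blk hs
    omega
  · rw [if_neg hs]
    have h1 : (ix x (msupp x)).natAbs ≤ normZ x := natAbs_le_normZ x _
    have h2 := normZ_le_blk x
    have h3 := blk_pos x
    omega

lemma kappa_pos {x : P} (h : x ≠ 0) : 1 ≤ kappa x := by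
  rw [kappa, if_neg h]
  have := blk_pos x
  have := idx_pos h
  nlinarith

lemma kappa_lt_of_blk_lt {s x : P} (hs : s ≠ 0) (hx : x ≠ 0) (h : blk s < blk x) :
    kappa s < kappa x := by
  rw [kappa, if_neg hs, kappa, if_neg hx]
  have h1 := idx_le hs
  have h2 := idx_pos hx
  have h3 := blk_pos s
  have h4 : idx s + 1 ≤ 2 * blk s := by omega
  have h6 : (blk s + 1) * (blk s + 1) ≤ blk x * blk x := Nat.mul_le_mul h h
  nlinarith

lemma blk_le_of_kappa_le {s x : P} (hs : s ≠ 0) (hx : x ≠ 0) (h : kappa s ≤ kappa x) :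
    blk s ≤ blk x := by
  by_contra hc
  push_neg at hc
  exact absurd h (not_le.mpr (kappa_lt_of_blk_lt hx hs hc))

lemma idx_le_of_kappa_le {s x : P} (hs : s ≠ 0) (hx : x ≠ 0) (hb : blk s = blk x)
    (h : kappa s ≤ kappa x) : idx s ≤ idx x := by
  rw [kappa, if_neg hs, kappa, if_neg hx, hb] at h
  omega

lemma kappa_lt_of_idx_lt {s x : P} (hs : s ≠ 0) (hx : x ≠ 0) (hb : blk s = blk x)
    (h : idx s < idx x) : kappa s < kappa x := by
  rw [kappa, if_neg hs, kappa, if_neg hx, hb]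
  omega

-- chunk 4: predecessor and safety
noncomputable def pmap (x : P) : P :=
  upd x (jx x) (ix x (jx x) - Int.sign (ix x (jx x)))

lemma int_step {a c : ℤ} (ha : a ≠ 0) (h1 : 0 < a → c ≤ a) (h2 : a < 0 → a ≤ c) :
    |(a - Int.sign a) - c| ≤ max |a - c| 1 := by
  rcases lt_or_gt_of_ne ha with h | h
  · rw [Int.sign_eq_neg_one_of_neg h]
    have hc := h2 h
    rcases eq_or_lt_of_le hc with rfl | hlt
    · simp
    · have : |a + 1 - c| = -(a + 1 - c) ⊔ (a + 1 - c) := (abs_eq_max_neg (a := a + 1 - c)).trans (by rw [max_comm])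
      have habs : |a - c| = c - a := by rw [abs_of_nonpos (by omega)]; ring
      rw [habs]
      have e : a - -1 - c = a + 1 - c := by ring
      rw [e]
      rcases le_or_gt (a + 1 - c) 0 with h3 | h3
      · rw [abs_of_nonpos h3]; apply le_max_of_le_left; omega
      · rw [abs_of_pos h3]; apply le_max_of_le_right; omega
  · rw [Int.sign_eq_one_of_pos h]
    have hc := h1 h
    rcases eq_or_lt_of_le hc with rfl | hlt
    · simp
    · have habs : |a - c| = a - c := abs_of_pos (by omega)
      rw [habs, abs_of_nonneg (by omega)]
      apply le_max_of_le_left; omega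

lemma sign_le {x s : P} (hx : x ≠ 0) (hk : kappa s ≤ kappa x) :
    (ix s (jx x)).natAbs ≤ (ix x (jx x)).natAbs := by
  by_cases hs : s = 0
  · simp [hs, ix_zero]
  have hbs : blk s ≤ blk x := blk_le_of_kappa_le hs hx hk
  by_cases hst : stage1 x
  · have h1 : (ix x (jx x)).natAbs = normZ x :=
      (Finset.mem_filter.mp (jx_mem_maxset hx hst)).2
    have h2 : (ix s (jx x)).natAbs ≤ normZ s := natAbs_le_normZ s _
    have h3 := normZ_le_blk s
    have h4 := stage1_blk hst
    omega
  · have hj : jx x = msupp x := by rw [jx, if_neg hst]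
    have hbx : blk x = msupp x + 1 := nonstage_blk hx hst
    rcases lt_or_eq_of_le hbs with hlt | heq
    · have h5 : msupp s + 1 ≤ blk s := msupp_lt_blk s
      have h6 : ix s (jx x) = 0 := by
        by_contra hc
        have h7 := le_msupp (mem_supp.mpr hc)
        omega
      simp [h6]
    · by_cases hss : stage1 s
      · have h1 := stage1_blk hss
        have h2 : msupp s + 2 ≤ normZ s := hss
        have h6 : ix s (jx x) = 0 := by
          by_contra hc
          have h7 := le_msupp (mem_supp.mpr hc)
          omega
        simp [h6]
      · have hbs' : blk s = msupp s + 1 := nonstage_blk hs hss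
        have hms : msupp s = msupp x := by omega
        have hidx := idx_le_of_kappa_le hs hx (by omega) hk
        rw [idx, if_neg hss, idx, if_neg hst] at hidx
        rw [hms] at hidx
        rw [hj]
        omega

lemma pmap_safety {x s : P} (hx : x ≠ 0) (hsx : s ≠ x) (hk : kappa s ≤ kappa x) :
    dist (pmap x) s ≤ dist x s := by
  have ha : ix x (jx x) ≠ 0 := mem_supp.mp (jx_mem_supp hx)
  have hsc := sign_le hx hk
  rw [dist_le_iff dist_nonneg]
  intro n
  by_cases hne : n = jx x
  · have hixp : ix (pmap x) n = ix x (jx x) - Int.sign (ix x (jx x)) := by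
      rw [pmap, ix_upd, if_pos hne]
    rw [hixp, hne]
    have key := int_step (c := ix s (jx x)) ha (fun h => by omega) (fun h => by omega)
    have key2 : |(((ix x (jx x) - Int.sign (ix x (jx x)) : ℤ) : ℝ)) - ((ix s (jx x) : ℤ) : ℝ)| ≤
        max |((ix x (jx x) : ℤ) : ℝ) - ((ix s (jx x) : ℤ) : ℝ)| 1 := by
      have h9 : (((|ix x (jx x) - Int.sign (ix x (jx x)) - ix s (jx x)| : ℤ)) : ℝ) ≤
          ((max |ix x (jx x) - ix s (jx x)| 1 : ℤ) : ℝ) := by exact_mod_cast key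
      push_cast at h9
      exact_mod_cast h9
    refine le_trans key2 (max_le ?_ ?_)
    · exact coord_le_dist x s (jx x)
    · rw [dist_comm]; exact one_le_dist hsx
  · have hixp : ix (pmap x) n = ix x n := by
      rw [pmap, ix_upd, if_neg hne]
    rw [hixp]
    exact coord_le_dist x s n

-- chunk 5: kappa decrease
lemma sign_ne_zero {a : ℤ} (ha : a ≠ 0) : Int.sign a ≠ 0 := by
  rcases lt_or_gt_of_ne ha with h | h
  · rw [Int.sign_eq_neg_one_of_neg h]; omega
  · rw [Int.sign_eq_one_of_pos h]; omega

lemma natAbs_sub_sign {a : ℤ} (ha : a ≠ 0) : (a - Int.sign a).natAbs = a.natAbs - 1 := by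
  rcases lt_or_gt_of_ne ha with h | h
  · rw [Int.sign_eq_neg_one_of_neg h]; omega
  · rw [Int.sign_eq_one_of_pos h]; omega

lemma pmap_ne {x : P} (hx : x ≠ 0) : pmap x ≠ x := by
  intro h
  have h1 : ix (pmap x) (jx x) = ix x (jx x) := by rw [h]
  rw [pmap, ix_upd, if_pos rfl] at h1
  have ha : ix x (jx x) ≠ 0 := mem_supp.mp (jx_mem_supp hx)
  have h2 : Int.sign (ix x (jx x)) = 0 := by omega
  exact sign_ne_zero ha h2

lemma ne_zero_of_supp_ne {x : P} (h : supp x ≠ ∅) : x ≠ 0 := by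
  intro hc; exact h (supp_eq_empty_iff.mpr hc)

lemma supp_ne_zero {x : P} (hx : x ≠ 0) : supp x ≠ ∅ := by
  intro hc; exact hx (supp_eq_empty_iff.mp hc)

lemma normZ_le_of {x : P} {c : ℕ} (h : ∀ n ∈ supp x, (ix x n).natAbs ≤ c) : normZ x ≤ c :=
  Finset.sup_le h

lemma msupp_congr {x y : P} (h : supp x = supp y) : msupp x = msupp y := by
  rw [msupp, msupp, h]

lemma supp_pmap_of_ne {x : P} (hx : x ≠ 0)
    (hv : ix x (jx x) - Int.sign (ix x (jx x)) ≠ 0) : supp (pmap x) = supp x := by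
  ext n
  rw [mem_supp, mem_supp, pmap, ix_upd]
  by_cases hne : n = jx x
  · rw [if_pos hne, hne]
    exact ⟨fun _ => mem_supp.mp (jx_mem_supp hx), fun _ => hv⟩
  · rw [if_neg hne]

lemma supp_pmap_of_eq {x : P} (hx : x ≠ 0)
    (hv : ix x (jx x) - Int.sign (ix x (jx x)) = 0) :
    supp (pmap x) = (supp x).erase (jx x) := by
  ext n
  rw [mem_supp, Finset.mem_erase, mem_supp, pmap, ix_upd]
  by_cases hne : n = jx x
  · rw [if_pos hne, hne]; simp [hv]
  · rw [if_neg hne]; simp [hne]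

lemma kappa_pmap_lt {x : P} (hx : x ≠ 0) : kappa (pmap x) < kappa x := by
  classical
  set j := jx x with hjdef
  set a := ix x j with hadef
  have ha : a ≠ 0 := mem_supp.mp (jx_mem_supp hx)
  set y := pmap x with hydef
  have hixy : ∀ n, ix y n = if n = j then a - Int.sign a else ix x n := by
    intro n; rw [hydef, pmap, ix_upd]
  have hixyj : ix y j = a - Int.sign a := by rw [hixy j, if_pos rfl]
  have hixyn : ∀ n, n ≠ j → ix y n = ix x n := fun n hn => by rw [hixy n, if_neg hn]
  have hvabs : (a - Int.sign a).natAbs = a.natAbs - 1 := natAbs_sub_sign ha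
  by_cases hst : stage1 x
  · -- stage 1 : |a| = normZ x = blk x
    have hk := stage1_blk hst
    have hanorm : a.natAbs = normZ x := (Finset.mem_filter.mp (jx_mem_maxset hx hst)).2
    have hstx : msupp x + 2 ≤ normZ x := hst
    have hk2 : 2 ≤ blk x := by omega
    have hvne : a - Int.sign a ≠ 0 := by
      intro hc
      rw [hc] at hvabs
      omega
    have hsupp : supp y = supp x := supp_pmap_of_ne hx hvne
    have hmsupp : msupp y = msupp x := msupp_congr hsupp
    have hyne : y ≠ 0 := ne_zero_of_supp_ne (by rw [hsupp]; exact supp_ne_zero hx)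
    by_cases hcnt : 2 ≤ cnt x
    · -- another maximal coordinate exists
      obtain ⟨j', hj'mem, hj'ne⟩ := Finset.exists_mem_ne (s := maxset x) (by simp only [cnt] at hcnt; omega) j
      have hj's : j' ∈ supp x := (Finset.mem_filter.mp hj'mem).1
      have hj'v : (ix x j').natAbs = normZ x := (Finset.mem_filter.mp hj'mem).2
      have hnle : normZ y ≤ normZ x := by
        apply normZ_le_of
        intro n hn
        by_cases hne : n = j
        · rw [hne, hixyj]; omega
        · rw [hixyn n hne]
          exact natAbs_le_normZ x n
      have hnge : normZ x ≤ normZ y := by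
        have := natAbs_le_normZ y j'
        rw [hixyn j' hj'ne] at this
        omega
      have hnorm : normZ y = normZ x := le_antisymm hnle hnge
      have hblk : blk y = blk x := by rw [blk, blk, hmsupp, hnorm]
      have hsty : stage1 y := by rw [stage1, hmsupp, hnorm]; exact hst
      have hmaxset : maxset y = (maxset x).erase j := by
        ext n
        rw [maxset, Finset.mem_erase, maxset, Finset.mem_filter, Finset.mem_filter, hsupp, hnorm]
        by_cases hne : n = j
        · subst hne
          constructor
          · intro ⟨_, hval⟩
            rw [hixyj] at hval
            omega
          · intro ⟨hne', _⟩; exact absurd rfl hne'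
        · rw [hixyn n hne]
          tauto
      have hcnty : cnt y = cnt x - 1 := by
        rw [cnt, cnt, hmaxset, Finset.card_erase_of_mem (jx_mem_maxset hx hst)]
      apply kappa_lt_of_idx_lt hyne hx hblk
      rw [idx, if_pos hsty, idx, if_pos hst, hcnty]
      omega
    · -- j is the only maximal coordinate
      have hcnt1 : cnt x = 1 := by
        have := cnt_pos hx; omega
      have honly : ∀ n, n ≠ j → (ix x n).natAbs ≤ normZ x - 1 := by
        intro n hne
        have hle := natAbs_le_normZ x n
        rcases eq_or_lt_of_le hle with heq | hlt
        · exfalso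
          have hsuppn : n ∈ supp x := by
            rw [mem_supp]
            intro hc; rw [hc] at heq; simp at heq; omega
          have hmem : n ∈ maxset x := Finset.mem_filter.mpr ⟨hsuppn, heq⟩
          have hjm := jx_mem_maxset hx hst
          have : 2 ≤ cnt x := Finset.one_lt_card.mpr ⟨n, hmem, j, hjm, hne⟩
          omega
        · omega
      have hnle : normZ y ≤ normZ x - 1 := by
        apply normZ_le_of
        intro n hn
        by_cases hne : n = j
        · rw [hne, hixyj]; omega
        · rw [hixyn n hne]; exact honly n hne
      have hblk : blk y ≤ blk x - 1 := by
        rw [blk]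
        apply max_le
        · rw [hmsupp]; omega
        · omega
      exact kappa_lt_of_blk_lt hyne hx (by have := blk_pos x; omega)
  · -- non-stage : j = msupp x
    have hj : j = msupp x := by rw [hjdef, jx, if_neg hst]
    have hk : blk x = msupp x + 1 := nonstage_blk hx hst
    have hnst : normZ x ≤ msupp x + 1 := by rw [stage1, not_le] at hst; omega
    by_cases ht : 2 ≤ a.natAbs
    · have hvne : a - Int.sign a ≠ 0 := by intro hc; rw [hc] at hvabs; simp at hvabs; omega
      have hsupp : supp y = supp x := supp_pmap_of_ne hx hvne
      have hmsupp : msupp y = msupp x := msupp_congr hsupp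
      have hyne : y ≠ 0 := ne_zero_of_supp_ne (by rw [hsupp]; exact supp_ne_zero hx)
      have hnle : normZ y ≤ normZ x := by
        apply normZ_le_of
        intro n hn
        by_cases hne : n = j
        · rw [hne, hixyj]
          have := natAbs_le_normZ x j
          omega
        · rw [hixyn n hne]; exact natAbs_le_normZ x n
      have hblk : blk y = blk x := by
        rw [blk, blk, hmsupp]
        have h1 := normZ_le_blk y
        have h2 : normZ y ≤ msupp x + 1 := by omega
        omega
      have hsty : ¬ stage1 y := by
        rw [stage1, not_le, hmsupp]
        omega
      apply kappa_lt_of_idx_lt hyne hx hblk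
      rw [idx, if_neg hsty, idx, if_neg hst, hblk, hmsupp, ← hj, hixyj]
      omega
    · -- |a| = 1, coordinate j disappears
      have ht1 : a.natAbs = 1 := by omega
      have hveq : a - Int.sign a = 0 := by
        have : (a - Int.sign a).natAbs = 0 := by omega
        omega
      have hsupp : supp y = (supp x).erase j := supp_pmap_of_eq hx hveq
      by_cases hy0 : y = 0
      · rw [kappa, if_pos hy0]
        exact kappa_pos hx
      · have hmsupp : msupp y < msupp x := by
          have h1 : msupp y ∈ supp y := msupp_mem hy0
          rw [hsupp, Finset.mem_erase] at h1
          have h2 := le_msupp h1.2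
          have h3 := h1.1
          rw [← hj]
          omega
        have hnle : normZ y ≤ normZ x := by
          apply normZ_le_of
          intro n hn
          rw [hsupp, Finset.mem_erase] at hn
          rw [hixyn n hn.1]
          exact natAbs_le_normZ x n
        have hblk : blk y ≤ blk x := by
          rw [blk]
          apply max_le
          · omega
          · rw [hk]; omega
        rcases eq_or_lt_of_le hblk with heq | hlt
        · -- blk y = blk x forces stage1 y
          have hny : normZ y = blk x := by
            have h1 : msupp y + 1 < blk x := by omega
            have h2 := msupp_lt_blk y
            have h3 := normZ_le_blk y
            rw [blk] at heq
            omega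
          have hsty : stage1 y := by
            rw [stage1, hny]
            omega
          apply kappa_lt_of_idx_lt hy0 hx heq
          rw [idx, if_pos hsty, idx, if_neg hst]
          have h1 := cnt_le y
          rw [hk, ← hj, ← hadef]
          omega
        · exact kappa_lt_of_blk_lt hy0 hx hlt

-- chunk 6: finiteness, countability, enumeration
lemma fiber_finite (N : ℕ) : {y : P | kappa y = N}.Finite := by
  classical
  have hsub : {y : P | kappa y = N} ⊆
      {y : P | (∀ n, (ix y n).natAbs ≤ N) ∧ ∀ n, N ≤ n → ix y n = 0} := by
    intro y hy
    simp only [Set.mem_setOf_eq] at hy ⊢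
    by_cases h0 : y = 0
    · subst h0
      exact ⟨fun n => by simp [ix_zero], fun n _ => ix_zero n⟩
    · have h1 : kappa y = blk y * blk y + idx y := by rw [kappa, if_neg h0]
      have h2 := blk_pos y
      have h3 := idx_pos h0
      have hblk : blk y + 1 ≤ N := by nlinarith [h1, hy]
      have h4 := normZ_le_blk y
      have h5 := msupp_lt_blk y
      constructor
      · intro n
        have := natAbs_le_normZ y n
        omega
      · intro n hn
        by_contra hc
        have := le_msupp (mem_supp.mpr hc)
        omega
  apply Set.Finite.subset _ hsub
  rw [← Set.finite_coe_iff]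
  apply Finite.of_injective
    (f := fun (y : {y : P | (∀ n, (ix y n).natAbs ≤ N) ∧ ∀ n, N ≤ n → ix y n = 0}) =>
      (fun i : Fin N => (⟨ix y.1 i, by
        have := y.2.1 i
        simp only [Set.mem_Icc]
        omega⟩ : Set.Icc (-(N:ℤ)) (N:ℤ))))
  intro y1 y2 h
  apply Subtype.ext
  apply ext_ix
  intro n
  by_cases hn : n < N
  · have := congrFun h ⟨n, hn⟩
    simpa using this
  · rw [y1.2.2 n (by omega), y2.2.2 n (by omega)]

instance : Countable P := by
  rw [← Set.countable_univ_iff]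
  have : (Set.univ : Set P) = ⋃ N, {y : P | kappa y = N} := by
    ext y; simp
  rw [this]
  exact Set.countable_iUnion (fun N => (fiber_finite N).countable)

noncomputable def gridPoint (n : ℕ) : P := upd 0 0 (n : ℤ)

instance : Infinite P := by
  apply Infinite.of_injective gridPoint
  intro m n h
  have : ix (gridPoint m) 0 = ix (gridPoint n) 0 := by rw [h]
  rw [gridPoint, gridPoint, ix_upd, ix_upd] at this
  simpa using this

noncomputable def emb : P → ℕ := (exists_injective_nat P).choose

lemma emb_inj : Function.Injective emb := (exists_injective_nat P).choose_spec

def plt (x y : P) : Prop := kappa x < kappa y ∨ (kappa x = kappa y ∧ emb x < emb y)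

lemma plt_trans {x y z : P} (h1 : plt x y) (h2 : plt y z) : plt x z := by
  rcases h1 with h1 | ⟨h1, h1'⟩ <;> rcases h2 with h2 | ⟨h2, h2'⟩
  · exact Or.inl (lt_trans h1 h2)
  · exact Or.inl (by omega)
  · exact Or.inl (by omega)
  · exact Or.inr ⟨by omega, by omega⟩

lemma plt_irrefl (x : P) : ¬ plt x x := by
  intro h
  rcases h with h | ⟨_, h⟩ <;> omega

lemma plt_total {x y : P} (h : x ≠ y) : plt x y ∨ plt y x := by
  rcases lt_trichotomy (kappa x) (kappa y) with h1 | h1 | h1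
  · exact Or.inl (Or.inl h1)
  · rcases lt_trichotomy (emb x) (emb y) with h2 | h2 | h2
    · exact Or.inl (Or.inr ⟨h1, h2⟩)
    · exact absurd (emb_inj h2) h
    · exact Or.inr (Or.inr ⟨h1.symm, h2⟩)
  · exact Or.inr (Or.inl h1)

lemma plt_wf : WellFounded plt := by
  have hsub : Subrelation plt (InvImage (Prod.Lex (· < ·) (· < ·))
      (fun x : P => (kappa x, emb x))) := by
    intro x y h
    rcases h with h | ⟨h1, h2⟩
    · exact Prod.Lex.left _ _ h
    · rw [InvImage]
      rw [h1]
      exact Prod.Lex.right _ h2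
  exact Subrelation.wf hsub (InvImage.wf _ (WellFounded.prod_lex (Nat.lt_wfRel.wf) (Nat.lt_wfRel.wf)))

lemma kappa_le_bset_finite (x : P) : {y : P | kappa y ≤ kappa x}.Finite := by
  have : {y : P | kappa y ≤ kappa x} ⊆ ⋃ m : Fin (kappa x + 1), {y : P | kappa y = m} := by
    intro y hy
    simp only [Set.mem_setOf_eq] at hy
    exact Set.mem_iUnion.mpr ⟨⟨kappa y, by omega⟩, rfl⟩
  exact Set.Finite.subset (Set.finite_iUnion (fun m : Fin (kappa x + 1) => fiber_finite m)) this

lemma plt_below_finite (x : P) : {y : P | plt y x}.Finite := by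
  apply Set.Finite.subset (kappa_le_bset_finite x)
  intro y hy
  rcases hy with h | ⟨h, _⟩ <;> simp only [Set.mem_setOf_eq] <;> omega

noncomputable def iota (x : P) : ℕ := Set.ncard {y : P | plt y x}

lemma iota_strictMono {x y : P} (h : plt x y) : iota x < iota y := by
  apply Set.ncard_lt_ncard _ (plt_below_finite y)
  constructor
  · intro a ha
    exact plt_trans ha h
  · intro hc
    exact plt_irrefl x (hc (by exact h : x ∈ {y' : P | plt y' y}))

lemma iota_inj : Function.Injective iota := by
  intro x y h
  by_contra hc
  rcases plt_total hc with h1 | h1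
  · exact absurd h (by have := iota_strictMono h1; omega)
  · exact absurd h (by have := iota_strictMono h1; omega)

lemma iota_surj : Function.Surjective iota := by
  intro n
  induction n with
  | zero =>
    refine ⟨plt_wf.min Set.univ ⟨0, trivial⟩, ?_⟩
    rw [iota, Set.ncard_eq_zero (plt_below_finite _)]
    ext y
    simp only [Set.mem_setOf_eq, Set.mem_empty_iff_false, iff_false]
    exact fun hy => plt_wf.not_lt_min Set.univ trivial hy
  | succ n ih =>
    obtain ⟨x, hx⟩ := ih
    have hT : {z : P | plt x z}.Nonempty := by
      by_contra hc
      rw [Set.not_nonempty_iff_eq_empty] at hc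
      have huniv : (Set.univ : Set P) ⊆ insert x {y : P | plt y x} := by
        intro z _
        rcases eq_or_ne z x with rfl | hne
        · exact Set.mem_insert _ _
        · rcases plt_total hne with h1 | h1
          · exact Set.mem_insert_of_mem _ h1
          · exfalso
            have : z ∈ {z : P | plt x z} := h1
            rw [hc] at this
            exact this
      have : (Set.univ : Set P).Finite :=
        Set.Finite.subset ((plt_below_finite x).insert x) huniv
      exact Set.infinite_univ this
    refine ⟨plt_wf.min _ hT, ?_⟩
    set y := plt_wf.min _ hT with hydef
    have hxy : plt x y := plt_wf.min_mem _ hT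
    have hIy : {z : P | plt z y} = insert x {z : P | plt z x} := by
      ext a
      simp only [Set.mem_setOf_eq, Set.mem_insert_iff]
      constructor
      · intro ha
        rcases eq_or_ne a x with rfl | hne
        · exact Or.inl rfl
        · rcases plt_total hne with h1 | h1
          · exact Or.inr h1
          · exact absurd ha (plt_wf.not_lt_min {z : P | plt x z} h1)
      · intro ha
        rcases ha with rfl | ha
        · exact hxy
        · exact plt_trans ha hxy
    have hxnot : x ∉ {z : P | plt z x} := fun hc => plt_irrefl x hc
    have hcard : (insert x {z : P | plt z x}).ncard = {z : P | plt z x}.ncard + 1 :=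
      Set.ncard_insert_of_notMem hxnot (plt_below_finite x)
    rw [iota, hIy, hcard, ← iota, hx]

noncomputable def uenum : ℕ → P := (Equiv.ofBijective iota ⟨iota_inj, iota_surj⟩).symm

lemma iota_uenum (n : ℕ) : iota (uenum n) = n :=
  (Equiv.ofBijective iota ⟨iota_inj, iota_surj⟩).apply_symm_apply n

lemma uenum_iota (x : P) : uenum (iota x) = x :=
  (Equiv.ofBijective iota ⟨iota_inj, iota_surj⟩).symm_apply_apply x

lemma iota_zero : iota (0 : P) = 0 := by
  rw [iota, Set.ncard_eq_zero (plt_below_finite _)]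
  ext y
  simp only [Set.mem_setOf_eq, Set.mem_empty_iff_false, iff_false]
  intro hy
  have hk0 : kappa (0 : P) = 0 := by rw [kappa, if_pos rfl]
  rcases hy with h | ⟨h, h2⟩
  · omega
  · have : y = 0 := by
      by_contra hc
      have := kappa_pos hc
      omega
    subst this
    omega

lemma ne_zero_of_iota_pos {x : P} (h : 0 < iota x) : x ≠ 0 := by
  intro hc; subst hc; rw [iota_zero] at h; omega

lemma kappa_le_of_iota_le {x y : P} (h : iota x ≤ iota y) : kappa x ≤ kappa y := by
  by_contra hc
  push_neg at hc
  have : plt y x := Or.inl hc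
  have := iota_strictMono this
  omega

lemma iota_pmap_lt {x : P} (hx : x ≠ 0) : iota (pmap x) < iota x :=
  iota_strictMono (Or.inl (kappa_pmap_lt hx))

-- chunk 7: retractions
noncomputable def rr (n : ℕ) (x : P) : P :=
  if iota x ≤ n then x else rr n (pmap x)
termination_by iota x
decreasing_by
  exact iota_pmap_lt (ne_zero_of_iota_pos (by omega))

lemma rr_of_le {n : ℕ} {x : P} (h : iota x ≤ n) : rr n x = x := by
  rw [rr, if_pos h]

lemma rr_of_gt {n : ℕ} {x : P} (h : n < iota x) : rr n x = rr n (pmap x) := by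
  rw [rr]
  rw [if_neg (by omega)]

lemma iota_rr_le (n : ℕ) (x : P) : iota (rr n x) ≤ n := by
  rcases le_or_gt (iota x) n with h | h
  · rw [rr_of_le h]; exact h
  · rw [rr_of_gt h]
    exact iota_rr_le n (pmap x)
termination_by iota x
decreasing_by
  exact iota_pmap_lt (ne_zero_of_iota_pos (by omega))

lemma rr_comp {n m : ℕ} (h : n ≤ m) (x : P) : rr n (rr m x) = rr n x := by
  rcases le_or_gt (iota x) m with h1 | h1
  · rw [rr_of_le h1]
  · rw [rr_of_gt h1, rr_of_gt (by omega : n < iota x), rr_comp h (pmap x)]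
termination_by iota x
decreasing_by
  exact iota_pmap_lt (ne_zero_of_iota_pos (by omega))

lemma rr_lip (n : ℕ) (x y : P) : dist (rr n x) (rr n y) ≤ dist x y := by
  rcases eq_or_ne y x with rfl | hyx
  · simp
  rcases le_or_gt (iota x) n with hx | hx
  · rcases le_or_gt (iota y) n with hy | hy
    · rw [rr_of_le hx, rr_of_le hy]
    · -- reduce y (note iota x ≤ n < iota y)
      rw [rr_of_gt hy]
      calc dist (rr n x) (rr n (pmap y)) ≤ dist x (pmap y) := rr_lip n x (pmap y)
      _ = dist (pmap y) x := dist_comm _ _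
      _ ≤ dist y x := pmap_safety (ne_zero_of_iota_pos (by omega)) hyx.symm
            (kappa_le_of_iota_le (by omega))
      _ = dist x y := dist_comm _ _
  · rcases le_or_gt (iota y) (iota x) with hy | hy
    · -- reduce x
      rw [rr_of_gt hx]
      calc dist (rr n (pmap x)) (rr n y) ≤ dist (pmap x) y := rr_lip n (pmap x) y
      _ ≤ dist x y := pmap_safety (ne_zero_of_iota_pos (by omega)) hyx
            (kappa_le_of_iota_le hy)
    · -- reduce y
      rw [rr_of_gt (by omega : n < iota y)]
      calc dist (rr n x) (rr n (pmap y)) ≤ dist x (pmap y) := rr_lip n x (pmap y)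
      _ = dist (pmap y) x := dist_comm _ _
      _ ≤ dist y x := pmap_safety (ne_zero_of_iota_pos (by omega)) hyx.symm
            (kappa_le_of_iota_le (by omega))
      _ = dist x y := dist_comm _ _
termination_by iota x + iota y
decreasing_by
  · have := iota_pmap_lt (ne_zero_of_iota_pos (show 0 < iota y by omega)); omega
  · have := iota_pmap_lt (ne_zero_of_iota_pos (show 0 < iota x by omega)); omega
  · have := iota_pmap_lt (ne_zero_of_iota_pos (show 0 < iota y by omega)); omega

-- packaged properties
lemma rr_lipschitzWith (n : ℕ) : LipschitzWith 1 (rr n) := by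
  apply LipschitzWith.of_dist_le_mul
  intro x y
  rw [NNReal.coe_one, one_mul]
  exact rr_lip n x y

lemma rr_mem_range (n : ℕ) (x : P) : ∃ k ≤ n, rr n x = uenum k :=
  ⟨iota (rr n x), iota_rr_le n x, (uenum_iota (rr n x)).symm⟩

lemma rr_fix_uenum {n k : ℕ} (h : k ≤ n) : rr n (uenum k) = uenum k :=
  rr_of_le (by rw [iota_uenum]; exact h)

lemma rr_eventually_fix (x : P) : ∀ n, iota x ≤ n → rr n x = x := fun n h => rr_of_le h

lemma rr_not_fix (n : ℕ) : rr n (uenum (n + 1)) ≠ uenum (n + 1) := by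
  intro hc
  have h1 := iota_rr_le n (uenum (n + 1))
  rw [hc, iota_uenum] at h1
  omega

lemma uenum_zero : uenum 0 = 0 := by
  have := uenum_iota (0 : P)
  rwa [iota_zero] at this

-- chunk 8: translation to base b
lemma add_mem_grid (x y : P) : ((x : CZero) + (y : CZero)) ∈ Mgrid := by
  intro n
  obtain ⟨k1, h1⟩ := x.2 n
  obtain ⟨k2, h2⟩ := y.2 n
  exact ⟨k1 + k2, by rw [ZeroAtInftyContinuousMap.coe_add, Pi.add_apply, h1, h2]; push_cast; ring⟩

lemma sub_mem_grid (x y : P) : ((x : CZero) - (y : CZero)) ∈ Mgrid := by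
  intro n
  obtain ⟨k1, h1⟩ := x.2 n
  obtain ⟨k2, h2⟩ := y.2 n
  exact ⟨k1 - k2, by rw [ZeroAtInftyContinuousMap.coe_sub, Pi.sub_apply, h1, h2]; push_cast; ring⟩

noncomputable def trB (b x : P) : P := ⟨(x : CZero) + (b : CZero), add_mem_grid x b⟩

noncomputable def trB' (b x : P) : P := ⟨(x : CZero) - (b : CZero), sub_mem_grid x b⟩

lemma trB_trB' (b x : P) : trB b (trB' b x) = x := by
  apply Subtype.ext
  show (x : CZero) - b + b = x
  abel

lemma trB'_trB (b x : P) : trB' b (trB b x) = x := by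
  apply Subtype.ext
  show (x : CZero) + b - b = x
  abel

lemma dist_trB (b x y : P) : dist (trB b x) (trB b y) = dist x y := by
  rw [dist_def, dist_def]
  exact dist_add_right _ _ _

lemma dist_trB' (b x y : P) : dist (trB' b x) (trB' b y) = dist x y := by
  rw [dist_def, dist_def]
  exact dist_sub_right _ _ _

lemma trB_zero (b : P) : trB b 0 = b := by
  apply Subtype.ext
  show (0 : CZero) + b = b
  abel

noncomputable def ub (b : P) (n : ℕ) : P := trB b (uenum n)

noncomputable def rb (b : P) (n : ℕ) (x : P) : P := trB b (rr n (trB' b x))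

lemma ub_zero (b : P) : ub b 0 = b := by rw [ub, uenum_zero, trB_zero]

lemma rb_lipschitzWith (b : P) (n : ℕ) : LipschitzWith 1 (rb b n) := by
  apply LipschitzWith.of_dist_le_mul
  intro x y
  rw [NNReal.coe_one, one_mul, rb, rb, dist_trB]
  calc dist (rr n (trB' b x)) (rr n (trB' b y)) ≤ dist (trB' b x) (trB' b y) := rr_lip n _ _
  _ = dist x y := dist_trB' b x y

lemma rb_mem_range (b : P) (n : ℕ) (x : P) : ∃ k ≤ n, rb b n x = ub b k := by
  obtain ⟨k, hk, heq⟩ := rr_mem_range n (trB' b x)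
  exact ⟨k, hk, by rw [rb, heq, ub]⟩

lemma rb_fix_ub (b : P) {n k : ℕ} (h : k ≤ n) : rb b n (ub b k) = ub b k := by
  rw [rb, ub, trB'_trB, rr_fix_uenum h]

lemma rb_comp (b : P) {n m : ℕ} (h : n ≤ m) (x : P) : rb b n (rb b m x) = rb b n x := by
  rw [rb, rb, rb, trB'_trB, rr_comp h]

lemma rb_eventually_fix (b : P) (x : P) : ∃ N, ∀ n, N ≤ n → rb b n x = x := by
  refine ⟨iota (trB' b x), fun n hn => ?_⟩
  rw [rb, rr_of_le hn, trB_trB']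

lemma rb_not_fix (b : P) (n : ℕ) : rb b n (ub b (n + 1)) ≠ ub b (n + 1) := by
  rw [rb, ub, trB'_trB]
  intro hc
  have := rr_not_fix n
  apply this
  have h2 := congrArg (trB' b) hc
  rwa [trB'_trB, trB'_trB] at h2

end Grid

theorem part2 {Mt : Type*} [MetricSpace Mt] {b : Mt}
    {F : Type} [NormedAddCommGroup F] [NormedSpace ℝ F] [CompleteSpace F]
    {δ : Mt → F} (hF : IsLipFreeSpace Mt b F δ) (u : ℕ → Mt) (r : ℕ → Mt → Mt)
    (ha : u 0 = b) (hlip : ∀ n, LipschitzWith 1 (r n))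
    (hc : ∀ n x, ∃ k ≤ n, r n x = u k)
    (hd : ∀ n k, k ≤ n → r n (u k) = u k)
    (he : ∀ n m x, n ≤ m → r n (r m x) = r n x)
    (hf : ∀ x, ∃ N, ∀ n, N ≤ n → r n x = x)
    (hg : ∀ n, r n (u (n+1)) ≠ u (n+1)) :
    ∃ z : ℕ → F, IsSchauderBasis z ∧
      ∀ (y : F) (a : ℕ → ℝ),
        Filter.Tendsto (fun n => ∑ i ∈ Finset.range n, a i • z i) Filter.atTop (nhds y) →
        ∀ n : ℕ, ‖∑ i ∈ Finset.range n, a i • z i‖ ≤ ‖y‖ := by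
  classical
  have hdense : Dense ((Submodule.span ℝ (Set.range δ) : Submodule ℝ F) : Set F) :=
    Submodule.dense_iff_topologicalClosure_eq_top.mpr hF.dense_span
  -- the projections
  have hex : ∀ n : ℕ, ∃ T : F →L[ℝ] F, ‖T‖ ≤ ((1:ℝ≥0) : ℝ) ∧ ∀ x, T (δ x) = δ (r n x) := by
    intro n
    apply hF.extend F 1 (fun x => δ (r n x))
    · have := (hF.isometry.lipschitz).comp (hlip n)
      simpa [Function.comp_def] using this
    · have h1 : r n b = b := by rw [← ha]; exact hd n 0 (Nat.zero_le n)
      rw [h1, hF.map_base]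
  choose S hSnorm hSapp using hex
  have hnorm1 : ∀ n y, ‖S n y‖ ≤ ‖y‖ := by
    intro n y
    calc ‖S n y‖ ≤ ‖S n‖ * ‖y‖ := (S n).le_opNorm y
    _ ≤ 1 * ‖y‖ := mul_le_mul_of_nonneg_right (by simpa using hSnorm n) (norm_nonneg y)
    _ = ‖y‖ := one_mul _
  -- composition law
  have hrr : ∀ n m x, r n (r m x) = r (min n m) x := by
    intro n m x
    rcases le_total n m with h | h
    · rw [min_eq_left h]; exact he n m x h
    · rw [min_eq_right h]
      obtain ⟨k, hk, hkx⟩ := hc m x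
      rw [hkx, hd n k (le_trans hk h)]
  have hSS : ∀ n m y, S n (S m y) = S (min n m) y := by
    intro n m
    have : (S n).comp (S m) = S (min n m) := by
      apply ContinuousLinearMap.ext_on hdense
      rintro w ⟨x, rfl⟩
      show S n (S m (δ x)) = S (min n m) (δ x)
      rw [hSapp m, hSapp n, hSapp (min n m), hrr]
    intro y
    calc S n (S m y) = ((S n).comp (S m)) y := rfl
    _ = S (min n m) y := by rw [this]
  have hS0 : ∀ y, S 0 y = 0 := by
    have : S 0 = 0 := by
      apply ContinuousLinearMap.ext_on hdense
      rintro w ⟨x, rfl⟩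
      show S 0 (δ x) = 0
      obtain ⟨k, hk, hkx⟩ := hc 0 x
      rw [hSapp 0, hkx]
      interval_cases k
      rw [ha, hF.map_base]
    intro y; rw [this]; rfl
  -- pointwise convergence on the span
  have hconv_span : ∀ y ∈ Submodule.span ℝ (Set.range δ),
      Filter.Tendsto (fun n => S n y) Filter.atTop (nhds y) := by
    intro y hy
    induction hy using Submodule.span_induction with
    | mem w hw =>
      obtain ⟨x, rfl⟩ := hw
      obtain ⟨N, hN⟩ := hf x
      apply tendsto_atTop_of_eventually_const (i₀ := N)
      intro n hn
      rw [hSapp n, hN n hn]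
    | zero =>
      apply tendsto_atTop_of_eventually_const (i₀ := 0)
      intro n _
      simp
    | add w v _ _ hw hv =>
      have := hw.add hv
      simpa using this
    | smul c w _ hw =>
      have := hw.const_smul c
      simpa using this
  -- pointwise convergence everywhere
  have hconv : ∀ y, Filter.Tendsto (fun n => S n y) Filter.atTop (nhds y) := by
    intro y
    rw [Metric.tendsto_atTop]
    intro ε hε
    obtain ⟨v, hv1, hv2⟩ := Metric.dense_iff.mp hdense y (ε/3) (by linarith)
    have hv : dist v y < ε / 3 := by
      rw [Metric.mem_ball] at hv1
      exact hv1
    obtain ⟨N, hN⟩ := Metric.tendsto_atTop.mp (hconv_span v hv2) (ε/3) (by linarith)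
    refine ⟨N, fun n hn => ?_⟩
    have h1 : dist (S n y) (S n v) ≤ dist y v := by
      rw [dist_eq_norm, dist_eq_norm, ← map_sub]
      exact hnorm1 n (y - v)
    calc dist (S n y) y ≤ dist (S n y) (S n v) + dist (S n v) v + dist v y :=
          dist_triangle4 _ _ _ _
    _ ≤ dist y v + dist (S n v) v + dist v y := by
          have := hN n hn; linarith [h1]
    _ < ε := by
          have h2 := hN n hn
          rw [dist_comm y v] at *
          linarith [hv, h2]
  -- the basis vectors
  set z : ℕ → F := fun n => δ (u (n+1)) - δ (r n (u (n+1))) with hzdef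
  have hzne : ∀ n, z n ≠ 0 := by
    intro n hz0
    apply hg n
    have := sub_eq_zero.mp hz0
    exact (hF.isometry.injective this).symm
  have hSz : ∀ n i, S n (z i) = if i < n then z i else 0 := by
    intro n i
    rw [hzdef]
    simp only [map_sub, hSapp]
    by_cases hi : i < n
    · rw [if_pos hi]
      have h1 : r n (u (i+1)) = u (i+1) := hd n (i+1) (by omega)
      obtain ⟨k, hk, hkx⟩ := hc i (u (i+1))
      have h2 : r n (r i (u (i+1))) = r i (u (i+1)) := by
        rw [hkx]; exact hd n k (by omega)
      rw [h1, h2]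
    · rw [if_neg hi]
      rw [he n i _ (by omega)]
      simp
  -- S n y lies in the span of the first δ(u k)
  have hSV : ∀ n y, S n y ∈ Submodule.span ℝ ((fun k => δ (u k)) '' Set.Iic n) := by
    intro n y
    set V : Submodule ℝ F := Submodule.span ℝ ((fun k => δ (u k)) '' Set.Iic n) with hV
    have hfin : ((fun k => δ (u k)) '' Set.Iic n).Finite :=
      Set.Finite.image _ (Set.finite_Iic n)
    have : FiniteDimensional ℝ V := FiniteDimensional.span_of_finite ℝ hfin
    have hclosed : IsClosed (V : Set F) := Submodule.closed_of_finiteDimensional V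
    have hW : Submodule.span ℝ (Set.range δ) ≤ V.comap (S n : F →ₗ[ℝ] F) := by
      rw [Submodule.span_le]
      rintro w ⟨x, rfl⟩
      simp only [SetLike.mem_coe, Submodule.mem_comap]
      rw [ContinuousLinearMap.coe_coe, hSapp n]
      obtain ⟨k, hk, hkx⟩ := hc n x
      rw [hkx]
      exact Submodule.subset_span ⟨k, hk, rfl⟩
    have hWclosed : IsClosed ((V.comap (S n : F →ₗ[ℝ] F) : Submodule ℝ F) : Set F) := by
      have : ((V.comap (S n : F →ₗ[ℝ] F) : Submodule ℝ F) : Set F) = (S n) ⁻¹' (V : Set F) := rfl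
      rw [this]
      exact hclosed.preimage (S n).continuous
    have := Submodule.topologicalClosure_minimal _ hW hWclosed
    rw [hF.dense_span] at this
    exact this (Submodule.mem_top (x := y))
  -- increments are multiples of z n
  have hdiff : ∀ y n, ∃ c : ℝ, S (n+1) y - S n y = c • z n := by
    intro y n
    have h1 := hSV (n+1) y
    have key : ∀ v ∈ Submodule.span ℝ ((fun k => δ (u k)) '' Set.Iic (n+1)),
        v - S n v ∈ Submodule.span ℝ {z n} := by
      intro v hv
      induction hv using Submodule.span_induction with
      | mem w hw =>
        obtain ⟨k, hk, rfl⟩ := hw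
        rw [hSapp n]
        rcases Nat.lt_or_ge k (n+1) with hkn | hkn
        · rw [hd n k (by omega), sub_self]
          exact Submodule.zero_mem _
        · have hk1 : k = n + 1 := by
            simp only [Set.mem_Iic] at hk
            omega
          subst hk1
          exact Submodule.subset_span rfl
      | zero => simpa using Submodule.zero_mem _
      | add w v hw' hv' hw hv =>
        have := Submodule.add_mem _ hw hv
        simpa [map_add, add_sub_add_comm] using this
      | smul c w hw' hw =>
        have := Submodule.smul_mem _ c hw
        simpa [map_smul, smul_sub] using this
    have h2 := key _ h1
    rw [hSS n (n+1), min_eq_left (by omega)] at h2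
    obtain ⟨c, hc'⟩ := Submodule.mem_span_singleton.mp h2
    exact ⟨c, hc'.symm⟩
  choose co hco using hdiff
  -- partial sums of the canonical coefficients
  have hpart : ∀ y n, ∑ i ∈ Finset.range n, co y i • z i = S n y := by
    intro y n
    have h1 : ∑ i ∈ Finset.range n, (S (i+1) y - S i y) = S n y - S 0 y :=
      Finset.sum_range_sub (fun i => S i y) n
    rw [hS0, sub_zero] at h1
    rw [← h1]
    apply Finset.sum_congr rfl
    intro i _
    exact (hco y i).symm
  -- any expansion has partial sums S n y
  have hun : ∀ (y : F) (a : ℕ → ℝ),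
      Filter.Tendsto (fun n => ∑ i ∈ Finset.range n, a i • z i) Filter.atTop (nhds y) →
      ∀ n, ∑ i ∈ Finset.range n, a i • z i = S n y := by
    intro y a hten n
    have h1 : Filter.Tendsto (fun m => S n (∑ i ∈ Finset.range m, a i • z i))
        Filter.atTop (nhds (S n y)) := ((S n).continuous.tendsto y).comp hten
    have h2 : ∀ m, n ≤ m → S n (∑ i ∈ Finset.range m, a i • z i)
        = ∑ i ∈ Finset.range n, a i • z i := by
      intro m hm
      rw [map_sum]
      have h3 : ∀ i ∈ Finset.range m, S n (a i • z i) = if i < n then a i • z i else 0 := by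
        intro i _
        rw [map_smul, hSz n i]
        by_cases hi : i < n
        · rw [if_pos hi, if_pos hi]
        · rw [if_neg hi, if_neg hi, smul_zero]
      rw [Finset.sum_congr rfl h3, ← Finset.sum_filter]
      congr 1
      ext i
      simp only [Finset.mem_filter, Finset.mem_range]
      omega
    have h3 : Filter.Tendsto (fun m => S n (∑ i ∈ Finset.range m, a i • z i))
        Filter.atTop (nhds (∑ i ∈ Finset.range n, a i • z i)) :=
      tendsto_atTop_of_eventually_const (i₀ := n) h2
    exact tendsto_nhds_unique h3 h1
  refine ⟨z, ?_, ?_⟩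
  · intro y
    refine ⟨co y, ?_, ?_⟩
    · exact Filter.Tendsto.congr (fun n => (hpart y n).symm) (hconv y)
    · intro a hten
      funext n
      have h1 := hun y a hten
      have h2 : a n • z n = co y n • z n := by
        have e1 := h1 (n+1)
        rw [Finset.sum_range_succ, h1 n] at e1
        rw [← hco y n, ← e1]
        abel
      exact smul_left_injective ℝ (hzne n) h2
  · intro y a hten n
    rw [hun y a hten n]
    exact hnorm1 n y

/-- The Lipschitz-free space of the integer grid in `c₀` (the set of
finitely supported integer-valued sequences, i.e. the integer-valued elements of `c₀`)
has a monotone Schauder basis, i.e. one with basis constant `1`. -/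
theorem stmt_16 (M : Set CZero)
    (hM : M = {x : CZero | ∀ n : ℕ, ∃ k : ℤ, x n = (k : ℝ)})
    (b : ↥M)
    (F : Type) [NormedAddCommGroup F] [NormedSpace ℝ F] [CompleteSpace F]
    (δ : ↥M → F) (hF : IsLipFreeSpace ↥M b F δ) :
    ∃ z : ℕ → F, IsSchauderBasis z ∧
      ∀ (y : F) (a : ℕ → ℝ),
        Filter.Tendsto (fun n => ∑ i ∈ Finset.range n, a i • z i) Filter.atTop (nhds y) →
        ∀ n : ℕ, ‖∑ i ∈ Finset.range n, a i • z i‖ ≤ ‖y‖ := by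
  have hM' : M = Mgrid := hM
  subst hM'
  exact part2 hF (Grid.ub b) (Grid.rb b) (Grid.ub_zero b) (Grid.rb_lipschitzWith b)
    (fun n x => Grid.rb_mem_range b n x) (fun n k hk => Grid.rb_fix_ub b hk)
    (fun n m x h => Grid.rb_comp b h x) (Grid.rb_eventually_fix b) (Grid.rb_not_fix b)
end
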